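/- arXiv:2104.02013 — 4 statements merged into one kernel-verified Lean document; each statement's English description precedes it below -/
import Mathlib

section
/- Let X and Y be finite metric measure spaces with m-pointed partitions P_X and P_Y and quantized representations Xᵐ and Yᵐ. Then |d_GW(X, Y) − d_GW(Xᵐ, Yᵐ)| ≤ 2(q(P_X) + q(P_Y)). -/
open Finset

noncomputable section

/-- A probability vector on a finite type. -/
def IsProb {X : Type*} [Fintype X] (μ : X → ℝ) : Prop :=
  (∀ x, 0 ≤ μ x) ∧ (∑ x, μ x) = 1

/-- `μ` is a coupling of the probability vectors `μX` and `μY`. -/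
def IsCoupling {X Y : Type*} [Fintype X] [Fintype Y]
    (μX : X → ℝ) (μY : Y → ℝ) (μ : X → Y → ℝ) : Prop :=
  (∀ x y, 0 ≤ μ x y) ∧ (∀ x, (∑ y, μ x y) = μX x) ∧ (∀ y, (∑ x, μ x y) = μY y)

/-- The Gromov–Wasserstein loss of a coupling, for given distance functions. -/
def GWLoss {X Y : Type*} [Fintype X] [Fintype Y]
    (dX : X → X → ℝ) (dY : Y → Y → ℝ) (μ : X → Y → ℝ) : ℝ :=
  ∑ x, ∑ y, ∑ x', ∑ y', (dX x x' - dY y y') ^ 2 * μ x y * μ x' y'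

/-- The Gromov–Wasserstein distance between two finite mm-spaces. -/
def dGW {X Y : Type*} [Fintype X] [Fintype Y]
    (dX : X → X → ℝ) (dY : Y → Y → ℝ) (μX : X → ℝ) (μY : Y → ℝ) : ℝ :=
  sInf {r : ℝ | ∃ μ, IsCoupling μX μY μ ∧ r = Real.sqrt (GWLoss dX dY μ)}

/-- An `m`-pointed partition of `X`: each point is assigned to one of `m` blocks
(`part`), and each block `p` has a distinguished representative `rep p` lying in it.
Blocks are the fibers of `part`; they are disjoint, cover `X`, and are nonempty. -/
structure PointedPartition (X : Type*) (m : ℕ) where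
  part : X → Fin m
  rep : Fin m → X
  part_rep : ∀ p, part (rep p) = p

/-- The mass `μ_X(Uᵖ)` of the block `Uᵖ`; as a function of `p` this is the measure
`μ_{P_X}` of the quantized representation `Xᵐ` (identified with `Fin m`). -/
def blockMass {X : Type*} [Fintype X] (μX : X → ℝ) {m : ℕ}
    (P : PointedPartition X m) (p : Fin m) : ℝ :=
  ∑ x, if P.part x = p then μX x else 0

/-- The normalized measure `μ_{Uᵖ} = μ_X|_{Uᵖ} / μ_X(Uᵖ)` of a block, extended by zero
to all of `X` (this is `μ̄_{Uᵖ}`). -/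
def blockMeasure {X : Type*} [Fintype X] (μX : X → ℝ) {m : ℕ}
    (P : PointedPartition X m) (p : Fin m) (x : X) : ℝ :=
  if P.part x = p then μX x / blockMass μX P p else 0

/-- `μ` is a quantization coupling: `μ(x,y) = Σ_{p,q} μm(xᵖ,y^q) μ̄_{xᵖ,y^q}(x,y)` where
`μm` couples the quantized measures and each `ν p q` is (the extension by zero of) a
coupling of the block measures with `ν p q (xᵖ, y^q) > 0`. -/
def IsQuantCoupling {X Y : Type*} [Fintype X] [Fintype Y] {m : ℕ}
    (μX : X → ℝ) (μY : Y → ℝ)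
    (PX : PointedPartition X m) (PY : PointedPartition Y m)
    (μ : X → Y → ℝ) : Prop :=
  ∃ (μm : Fin m → Fin m → ℝ) (ν : Fin m → Fin m → X → Y → ℝ),
    IsCoupling (blockMass μX PX) (blockMass μY PY) μm ∧
    (∀ p q, IsCoupling (blockMeasure μX PX p) (blockMeasure μY PY q) (ν p q)) ∧
    (∀ p q, 0 < ν p q (PX.rep p) (PY.rep q)) ∧
    (∀ x y, μ x y = ∑ p, ∑ q, μm p q * ν p q x y)

/-- The quantized Gromov–Wasserstein distance between `m`-pointed mm-spaces. -/
def dqGW {X Y : Type*} [Fintype X] [Fintype Y] {m : ℕ}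
    (dX : X → X → ℝ) (dY : Y → Y → ℝ) (μX : X → ℝ) (μY : Y → ℝ)
    (PX : PointedPartition X m) (PY : PointedPartition Y m) : ℝ :=
  sInf {r : ℝ | ∃ μ, IsQuantCoupling μX μY PX PY μ ∧ r = Real.sqrt (GWLoss dX dY μ)}

/-- The quantized eccentricity `q(P_X) = (Σ_p μ_X(Uᵖ) s_{Uᵖ}(xᵖ)²)^{1/2}`, where
`s_{Uᵖ}(xᵖ)² = Σ_{x ∈ Uᵖ} d_X(xᵖ,x)² μ_{Uᵖ}(x)`. -/
def qEcc {X : Type*} [Fintype X] (dX : X → X → ℝ) (μX : X → ℝ) {m : ℕ}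
    (P : PointedPartition X m) : ℝ :=
  Real.sqrt (∑ p, blockMass μX P p * ∑ x, dX (P.rep p) x ^ 2 * blockMeasure μX P p x)

/-- The `m`-quantized eccentricity `q_m(X)`: minimum of `q(P_X)` over `m`-pointed
partitions. -/
def qEccMin (X : Type*) [Fintype X] (dX : X → X → ℝ) (μX : X → ℝ) (m : ℕ) : ℝ :=
  sInf {r : ℝ | ∃ P : PointedPartition X m, r = qEcc dX μX P}

end

-- test L2 lemmas
lemma l2_sum_nonneg {ι : Type*} [Fintype ι] (w f : ι → ℝ) (hw : ∀ i, 0 ≤ w i) :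
    0 ≤ ∑ i, w i * f i ^ 2 :=
  Finset.sum_nonneg fun i _ => mul_nonneg (hw i) (sq_nonneg _)

lemma l2_tri {ι : Type*} [Fintype ι] (w f g : ι → ℝ) (hw : ∀ i, 0 ≤ w i) :
    Real.sqrt (∑ i, w i * (f i + g i) ^ 2) ≤
      Real.sqrt (∑ i, w i * f i ^ 2) + Real.sqrt (∑ i, w i * g i ^ 2) := by
  set F := Real.sqrt (∑ i, w i * f i ^ 2) with hF
  set G := Real.sqrt (∑ i, w i * g i ^ 2) with hG
  have hFn : 0 ≤ F := Real.sqrt_nonneg _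
  have hGn : 0 ≤ G := Real.sqrt_nonneg _
  have hF2 : F ^ 2 = ∑ i, w i * f i ^ 2 := Real.sq_sqrt (l2_sum_nonneg w f hw)
  have hG2 : G ^ 2 = ∑ i, w i * g i ^ 2 := Real.sq_sqrt (l2_sum_nonneg w g hw)
  have key : ∑ i, w i * (f i * g i) ≤ F * G := by
    have h := Real.sum_mul_le_sqrt_mul_sqrt Finset.univ
      (fun i => Real.sqrt (w i) * f i) (fun i => Real.sqrt (w i) * g i)
    have e1 : ∀ i : ι, (Real.sqrt (w i) * f i) * (Real.sqrt (w i) * g i)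
        = w i * (f i * g i) := fun i => by
      calc (Real.sqrt (w i) * f i) * (Real.sqrt (w i) * g i)
          = (Real.sqrt (w i) * Real.sqrt (w i)) * (f i * g i) := by ring
        _ = w i * (f i * g i) := by rw [Real.mul_self_sqrt (hw i)]
    have e2 : ∀ i : ι, (Real.sqrt (w i) * f i) ^ 2 = w i * f i ^ 2 := fun i => by
      rw [mul_pow, Real.sq_sqrt (hw i)]
    have e3 : ∀ i : ι, (Real.sqrt (w i) * g i) ^ 2 = w i * g i ^ 2 := fun i => by
      rw [mul_pow, Real.sq_sqrt (hw i)]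
    simp_rw [e1, e2, e3] at h
    exact h
  have expand : (∑ i, w i * (f i + g i) ^ 2)
      = (∑ i, w i * f i ^ 2) + 2 * (∑ i, w i * (f i * g i)) + (∑ i, w i * g i ^ 2) := by
    have : ∀ i : ι, w i * (f i + g i) ^ 2
        = w i * f i ^ 2 + 2 * (w i * (f i * g i)) + w i * g i ^ 2 := fun i => by ring
    simp_rw [this, Finset.sum_add_distrib, ← Finset.mul_sum]
  have : (∑ i, w i * (f i + g i) ^ 2) ≤ (F + G) ^ 2 := by nlinarith
  calc Real.sqrt (∑ i, w i * (f i + g i) ^ 2) ≤ Real.sqrt ((F + G) ^ 2) :=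
        Real.sqrt_le_sqrt this
    _ = F + G := Real.sqrt_sq (by linarith)

lemma l2_mono {ι : Type*} [Fintype ι] (w f g : ι → ℝ) (hw : ∀ i, 0 ≤ w i)
    (h : ∀ i, |f i| ≤ g i) :
    Real.sqrt (∑ i, w i * f i ^ 2) ≤ Real.sqrt (∑ i, w i * g i ^ 2) := by
  apply Real.sqrt_le_sqrt
  refine Finset.sum_le_sum fun i _ => mul_le_mul_of_nonneg_left ?_ (hw i)
  calc f i ^ 2 = |f i| ^ 2 := (sq_abs _).symm
    _ ≤ g i ^ 2 := pow_le_pow_left₀ (abs_nonneg _) (h i) 2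

lemma l2_perturb {ι : Type*} [Fintype ι] (w A B E : ι → ℝ) (hw : ∀ i, 0 ≤ w i)
    (h : ∀ i, |A i - B i| ≤ E i) :
    |Real.sqrt (∑ i, w i * A i ^ 2) - Real.sqrt (∑ i, w i * B i ^ 2)|
      ≤ Real.sqrt (∑ i, w i * E i ^ 2) := by
  have side : ∀ (A B : ι → ℝ), (∀ i, |A i - B i| ≤ E i) →
      Real.sqrt (∑ i, w i * A i ^ 2) ≤
        Real.sqrt (∑ i, w i * B i ^ 2) + Real.sqrt (∑ i, w i * E i ^ 2) := by
    intro A B h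
    have e : (∑ i, w i * A i ^ 2) = ∑ i, w i * (B i + (A i - B i)) ^ 2 := by
      refine Finset.sum_congr rfl fun i _ => by ring
    rw [e]
    refine le_trans (l2_tri w B (fun i => A i - B i) hw) ?_
    exact add_le_add le_rfl (l2_mono w (fun i => A i - B i) E hw h)
  rw [abs_sub_le_iff]
  constructor
  · linarith [side A B h]
  · have h' : ∀ i, |B i - A i| ≤ E i := fun i => by rw [abs_sub_comm]; exact h i
    linarith [side B A h']

lemma regroup1 {α κ : Type*} [Fintype α] [Fintype κ] [DecidableEq κ] (π : α → κ) (f : α → ℝ) :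
    ∑ a, f a = ∑ k, ∑ a, if π a = k then f a else 0 := by
  conv_rhs => rw [Finset.sum_comm]
  simp [Finset.sum_ite_eq]

lemma regroup_lin {α κ : Type*} [Fintype α] [Fintype κ] [DecidableEq κ] (π : α → κ)
    (μ' : α → ℝ) (h : κ → ℝ) :
    ∑ a, h (π a) * μ' a = ∑ k, h k * ∑ a, if π a = k then μ' a else 0 := by
  simp_rw [Finset.mul_sum, mul_ite, mul_zero]
  rw [Finset.sum_comm]
  simp [Finset.sum_ite_eq]

lemma regroup_pair {α κ : Type*} [Fintype α] [Fintype κ] [DecidableEq κ] (π : α → κ)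
    (μ' : α → ℝ) (g : κ → κ → ℝ) :
    ∑ a, ∑ b, g (π a) (π b) * (μ' a * μ' b)
      = ∑ k, ∑ l, g k l * ((∑ a, if π a = k then μ' a else 0) *
          (∑ b, if π b = l then μ' b else 0)) := by
  calc ∑ a, ∑ b, g (π a) (π b) * (μ' a * μ' b)
      = ∑ a, (∑ l, g (π a) l * (∑ c, if π c = l then μ' c else 0)) * μ' a := by
        refine Finset.sum_congr rfl fun a _ => ?_
        rw [← regroup_lin π μ' (g (π a)), Finset.sum_mul]
        exact Finset.sum_congr rfl fun b _ => by ring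
    _ = ∑ k, (∑ l, g k l * (∑ c, if π c = l then μ' c else 0)) *
          (∑ a, if π a = k then μ' a else 0) :=
        regroup_lin π μ' (fun k => ∑ l, g k l * (∑ c, if π c = l then μ' c else 0))
    _ = ∑ k, ∑ l, g k l * ((∑ a, if π a = k then μ' a else 0) *
          (∑ b, if π b = l then μ' b else 0)) := by
        refine Finset.sum_congr rfl fun k _ => ?_
        rw [Finset.sum_mul]
        exact Finset.sum_congr rfl fun l _ => by ring

section MassFacts
variable {X : Type*} [Fintype X] {m : ℕ} (μX : X → ℝ) (PX : PointedPartition X m)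

lemma mass_nonneg (h : ∀ x, 0 ≤ μX x) (p : Fin m) : 0 ≤ blockMass μX PX p :=
  Finset.sum_nonneg fun x _ => by split_ifs; exacts [h x, le_refl 0]

set_option linter.unusedVariables false in
lemma le_mass (h : ∀ x, 0 ≤ μX x) {x : X} {p : Fin m} (hx : PX.part x = p) :
    μX x ≤ blockMass μX PX p := by
  have := Finset.single_le_sum (f := fun x => if PX.part x = p then μX x else 0)
    (fun i _ => by split_ifs; exacts [h i, le_refl 0]) (Finset.mem_univ x)
  simpa [hx, blockMass] using this

lemma mass_zero_imp (h : ∀ x, 0 ≤ μX x) {x : X} {p : Fin m} (hx : PX.part x = p)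
    (h0 : blockMass μX PX p = 0) : μX x = 0 :=
  le_antisymm (h0 ▸ le_mass μX PX h hx) (h x)

lemma div_mass_mul (h : ∀ x, 0 ≤ μX x) {x : X} {p : Fin m} (hx : PX.part x = p) :
    μX x / blockMass μX PX p * blockMass μX PX p = μX x := by
  rcases eq_or_ne (blockMass μX PX p) 0 with h0 | h0
  · simp [mass_zero_imp μX PX h hx h0, h0]
  · exact div_mul_cancel₀ _ h0

lemma sum_mass : ∑ p, blockMass μX PX p = ∑ x, μX x := by
  simp only [blockMass]
  exact (regroup1 PX.part μX).symm

lemma qEcc_eq (h : ∀ x, 0 ≤ μX x) (dX : X → X → ℝ) :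
    qEcc dX μX PX = Real.sqrt (∑ x, dX (PX.rep (PX.part x)) x ^ 2 * μX x) := by
  unfold qEcc
  congr 1
  have step : ∀ p : Fin m, blockMass μX PX p * ∑ x, dX (PX.rep p) x ^ 2 * blockMeasure μX PX p x
      = ∑ x, if PX.part x = p then dX (PX.rep (PX.part x)) x ^ 2 * μX x else 0 := by
    intro p
    rw [Finset.mul_sum]
    refine Finset.sum_congr rfl fun x _ => ?_
    unfold blockMeasure
    split_ifs with hx
    · rw [show blockMass μX PX p * (dX (PX.rep p) x ^ 2 * (μX x / blockMass μX PX p))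
          = dX (PX.rep p) x ^ 2 * (μX x / blockMass μX PX p * blockMass μX PX p) from by ring,
        div_mass_mul μX PX h hx, hx]
    · simp
  simp_rw [step]
  exact (regroup1 PX.part _).symm

end MassFacts

section Push
variable {X Y : Type*} [Fintype X] [Fintype Y] {m : ℕ}
  (PX : PointedPartition X m) (PY : PointedPartition Y m)

/-- Pushforward of a coupling to the quantized spaces. -/
noncomputable def pushC (μ : X → Y → ℝ) (p q : Fin m) : ℝ :=
  ∑ a : X × Y, if (PX.part a.1, PY.part a.2) = (p, q) then μ a.1 a.2 else 0

lemma pushC_nonneg (μ : X → Y → ℝ) (h : ∀ x y, 0 ≤ μ x y) (p q : Fin m) :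
    0 ≤ pushC PX PY μ p q :=
  Finset.sum_nonneg fun a _ => by split_ifs; exacts [h a.1 a.2, le_refl 0]

lemma pushC_marg_fst {μX : X → ℝ} (μ : X → Y → ℝ) (hrow : ∀ x, (∑ y, μ x y) = μX x)
    (p : Fin m) : ∑ q, pushC PX PY μ p q = blockMass μX PX p := by
  unfold pushC blockMass
  rw [Finset.sum_comm]
  simp only [Prod.mk.injEq, ite_and]
  rw [Fintype.sum_prod_type]
  refine Finset.sum_congr rfl fun x _ => ?_
  by_cases hx : PX.part x = p
  · simp only [hx, if_true]
    rw [Finset.sum_comm, ← regroup1 PY.part (fun y => μ x y)]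
    exact hrow x
  · simp [hx]

lemma pushC_marg_snd {μY : Y → ℝ} (μ : X → Y → ℝ) (hcol : ∀ y, (∑ x, μ x y) = μY y)
    (q : Fin m) : ∑ p, pushC PX PY μ p q = blockMass μY PY q := by
  unfold pushC blockMass
  rw [Finset.sum_comm]
  simp only [Prod.mk.injEq, ite_and]
  rw [Fintype.sum_prod_type, Finset.sum_comm]
  refine Finset.sum_congr rfl fun y _ => ?_
  by_cases hy : PY.part y = q
  · simp only [hy, if_true]
    simp only [Finset.sum_ite_eq, Finset.mem_univ, if_true]
    exact hcol y
  · simp [hy]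

lemma pushC_isCoupling {μX : X → ℝ} {μY : Y → ℝ} (μ : X → Y → ℝ)
    (hμ : IsCoupling μX μY μ) :
    IsCoupling (blockMass μX PX) (blockMass μY PY) (pushC PX PY μ) :=
  ⟨pushC_nonneg PX PY μ hμ.1,
   pushC_marg_fst PX PY μ hμ.2.1,
   pushC_marg_snd PX PY μ hμ.2.2⟩

end Push

section Core
variable {X Y : Type*} [Fintype X] [Fintype Y] [MetricSpace X] [MetricSpace Y] {m : ℕ}

lemma core (μX : X → ℝ) (μY : Y → ℝ) (hμX : IsProb μX) (hμY : IsProb μY)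
    (PX : PointedPartition X m) (PY : PointedPartition Y m)
    (μ : X → Y → ℝ) (hμ : IsCoupling μX μY μ) :
    |Real.sqrt (GWLoss (fun x x' => dist x x') (fun y y' => dist y y') μ) -
        Real.sqrt (GWLoss (fun p q => dist (PX.rep p) (PX.rep q))
          (fun p q => dist (PY.rep p) (PY.rep q)) (pushC PX PY μ))| ≤
      2 * (qEcc (fun x x' => dist x x') μX PX + qEcc (fun y y' => dist y y') μY PY) := by
  classical
  -- notation
  set μ' : X × Y → ℝ := fun a => μ a.1 a.2 with hμ'def
  set w : (X × Y) × (X × Y) → ℝ := fun i => μ' i.1 * μ' i.2 with hwdef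
  have hμ'nn : ∀ a, 0 ≤ μ' a := fun a => hμ.1 a.1 a.2
  have hw : ∀ i, 0 ≤ w i := fun i => mul_nonneg (hμ'nn i.1) (hμ'nn i.2)
  have htot : (∑ a : X × Y, μ' a) = 1 := by
    rw [Fintype.sum_prod_type]
    simp_rw [hμ'def]
    calc (∑ x, ∑ y, μ x y) = ∑ x, μX x := Finset.sum_congr rfl fun x _ => hμ.2.1 x
      _ = 1 := hμX.2
  -- the four error functions and main A, B
  have hGW1 : GWLoss (fun x x' => dist x x') (fun y y' => dist y y') μ
      = ∑ i, w i * (dist i.1.1 i.2.1 - dist i.1.2 i.2.2) ^ 2 := by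
    unfold GWLoss
    simp only [Fintype.sum_prod_type]
    refine Finset.sum_congr rfl fun x _ => Finset.sum_congr rfl fun y _ =>
      Finset.sum_congr rfl fun x' _ => Finset.sum_congr rfl fun y' _ => ?_
    simp only [hwdef, hμ'def]
    ring
  have hGW2 : GWLoss (fun p q => dist (PX.rep p) (PX.rep q))
        (fun p q => dist (PY.rep p) (PY.rep q)) (pushC PX PY μ)
      = ∑ i, w i * (dist (PX.rep (PX.part i.1.1)) (PX.rep (PX.part i.2.1)) -
          dist (PY.rep (PY.part i.1.2)) (PY.rep (PY.part i.2.2))) ^ 2 := by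
    have hgp := regroup_pair (fun a : X × Y => (PX.part a.1, PY.part a.2)) μ'
      (fun k l => (dist (PX.rep k.1) (PX.rep l.1) - dist (PY.rep k.2) (PY.rep l.2)) ^ 2)
    have hQ : ∀ k : Fin m × Fin m,
        (∑ a : X × Y, if (PX.part a.1, PY.part a.2) = k then μ' a else 0)
          = pushC PX PY μ k.1 k.2 := fun k => rfl
    calc GWLoss (fun p q => dist (PX.rep p) (PX.rep q))
            (fun p q => dist (PY.rep p) (PY.rep q)) (pushC PX PY μ)
        = ∑ k : Fin m × Fin m, ∑ l : Fin m × Fin m,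
            (dist (PX.rep k.1) (PX.rep l.1) - dist (PY.rep k.2) (PY.rep l.2)) ^ 2 *
              ((∑ a : X × Y, if (PX.part a.1, PY.part a.2) = k then μ' a else 0) *
               (∑ b : X × Y, if (PX.part b.1, PY.part b.2) = l then μ' b else 0)) := by
          unfold GWLoss
          simp only [Fintype.sum_prod_type, hQ]
          refine Finset.sum_congr rfl fun p _ => Finset.sum_congr rfl fun q _ =>
            Finset.sum_congr rfl fun p' _ => Finset.sum_congr rfl fun q' _ => by ring
      _ = ∑ a : X × Y, ∑ b : X × Y,
            (dist (PX.rep (PX.part a.1)) (PX.rep (PX.part b.1)) -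
              dist (PY.rep (PY.part a.2)) (PY.rep (PY.part b.2))) ^ 2 * (μ' a * μ' b) := by
          rw [← hgp]
      _ = ∑ i, w i * (dist (PX.rep (PX.part i.1.1)) (PX.rep (PX.part i.2.1)) -
            dist (PY.rep (PY.part i.1.2)) (PY.rep (PY.part i.2.2))) ^ 2 := by
          conv_rhs => rw [Fintype.sum_prod_type]
          refine Finset.sum_congr rfl fun a _ => Finset.sum_congr rfl fun b _ => ?_
          simp only [hwdef]
          ring
  have hmargX : ∀ f : X → ℝ, (∑ a : X × Y, f a.1 * μ' a) = ∑ x, f x * μX x := by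
    intro f
    rw [Fintype.sum_prod_type]
    refine Finset.sum_congr rfl fun x _ => ?_
    have h1 : (∑ y, μ' (x, y)) = μX x := by
      simp only [hμ'def]; exact hμ.2.1 x
    calc (∑ y, f (x, y).1 * μ' (x, y)) = f x * ∑ y, μ' (x, y) := by
          rw [Finset.mul_sum]
      _ = f x * μX x := by rw [h1]
  have hmargY : ∀ f : Y → ℝ, (∑ a : X × Y, f a.2 * μ' a) = ∑ y, f y * μY y := by
    intro f
    rw [Fintype.sum_prod_type, Finset.sum_comm]
    refine Finset.sum_congr rfl fun y _ => ?_
    have h1 : (∑ x, μ' (x, y)) = μY y := by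
      simp only [hμ'def]; exact hμ.2.2 y
    calc (∑ x, f (x, y).2 * μ' (x, y)) = f y * ∑ x, μ' (x, y) := by
          rw [Finset.mul_sum]
      _ = f y * μY y := by rw [h1]
  have hleft : ∀ c : X × Y → ℝ, (∑ i : (X × Y) × (X × Y), w i * c i.1 ^ 2)
      = ∑ a : X × Y, c a ^ 2 * μ' a := by
    intro c
    rw [Fintype.sum_prod_type]
    have h1 : ∀ a : X × Y, (∑ b : X × Y, w (a, b) * c (a, b).1 ^ 2)
        = c a ^ 2 * μ' a * ∑ b : X × Y, μ' b := by
      intro a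
      rw [Finset.mul_sum]
      exact Finset.sum_congr rfl fun b _ => by simp only [hwdef]; ring
    simp_rw [h1, htot, mul_one]
  have hright : ∀ c : X × Y → ℝ, (∑ i : (X × Y) × (X × Y), w i * c i.2 ^ 2)
      = ∑ b : X × Y, c b ^ 2 * μ' b := by
    intro c
    rw [Fintype.sum_prod_type]
    have h1 : ∀ a : X × Y, (∑ b : X × Y, w (a, b) * c (a, b).2 ^ 2)
        = μ' a * ∑ b : X × Y, c b ^ 2 * μ' b := by
      intro a
      rw [Finset.mul_sum]
      exact Finset.sum_congr rfl fun b _ => by simp only [hwdef]; ring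
    rw [Finset.sum_congr rfl fun a _ => h1 a, ← Finset.sum_mul, htot, one_mul]
  -- the four error L² norms
  have hqX : Real.sqrt (∑ x, dist x (PX.rep (PX.part x)) ^ 2 * μX x)
      = qEcc (fun x x' => dist x x') μX PX := by
    rw [qEcc_eq μX PX hμX.1]
    congr 1
    exact Finset.sum_congr rfl fun x _ => by rw [dist_comm]
  have hqY : Real.sqrt (∑ y, dist y (PY.rep (PY.part y)) ^ 2 * μY y)
      = qEcc (fun y y' => dist y y') μY PY := by
    rw [qEcc_eq μY PY hμY.1]
    congr 1
    exact Finset.sum_congr rfl fun y _ => by rw [dist_comm]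
  have b1 : Real.sqrt (∑ i : (X × Y) × (X × Y), w i * dist i.1.1 (PX.rep (PX.part i.1.1)) ^ 2)
      = qEcc (fun x x' => dist x x') μX PX := by
    rw [hleft (fun a => dist a.1 (PX.rep (PX.part a.1))),
      hmargX (fun x => dist x (PX.rep (PX.part x)) ^ 2)]
    exact hqX
  have b2 : Real.sqrt (∑ i : (X × Y) × (X × Y), w i * dist i.2.1 (PX.rep (PX.part i.2.1)) ^ 2)
      = qEcc (fun x x' => dist x x') μX PX := by
    rw [hright (fun a => dist a.1 (PX.rep (PX.part a.1))),
      hmargX (fun x => dist x (PX.rep (PX.part x)) ^ 2)]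
    exact hqX
  have b3 : Real.sqrt (∑ i : (X × Y) × (X × Y), w i * dist i.1.2 (PY.rep (PY.part i.1.2)) ^ 2)
      = qEcc (fun y y' => dist y y') μY PY := by
    rw [hleft (fun a => dist a.2 (PY.rep (PY.part a.2))),
      hmargY (fun y => dist y (PY.rep (PY.part y)) ^ 2)]
    exact hqY
  have b4 : Real.sqrt (∑ i : (X × Y) × (X × Y), w i * dist i.2.2 (PY.rep (PY.part i.2.2)) ^ 2)
      = qEcc (fun y y' => dist y y') μY PY := by
    rw [hright (fun a => dist a.2 (PY.rep (PY.part a.2))),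
      hmargY (fun y => dist y (PY.rep (PY.part y)) ^ 2)]
    exact hqY
  -- pointwise error bound
  have hAB : ∀ i : (X × Y) × (X × Y),
      |(dist i.1.1 i.2.1 - dist i.1.2 i.2.2) -
        (dist (PX.rep (PX.part i.1.1)) (PX.rep (PX.part i.2.1)) -
          dist (PY.rep (PY.part i.1.2)) (PY.rep (PY.part i.2.2)))| ≤
      dist i.1.1 (PX.rep (PX.part i.1.1)) +
        (dist i.2.1 (PX.rep (PX.part i.2.1)) +
          (dist i.1.2 (PY.rep (PY.part i.1.2)) + dist i.2.2 (PY.rep (PY.part i.2.2)))) := by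
    rintro ⟨⟨x, y⟩, ⟨x', y'⟩⟩
    have h1 := dist_dist_dist_le x x' (PX.rep (PX.part x)) (PX.rep (PX.part x'))
    have h2 := dist_dist_dist_le y y' (PY.rep (PY.part y)) (PY.rep (PY.part y'))
    rw [Real.dist_eq] at h1 h2
    have h3 := abs_sub (dist x x' - dist (PX.rep (PX.part x)) (PX.rep (PX.part x')))
      (dist y y' - dist (PY.rep (PY.part y)) (PY.rep (PY.part y')))
    calc |(dist x x' - dist y y') -
            (dist (PX.rep (PX.part x)) (PX.rep (PX.part x')) -
              dist (PY.rep (PY.part y)) (PY.rep (PY.part y')))|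
        = |(dist x x' - dist (PX.rep (PX.part x)) (PX.rep (PX.part x'))) -
            (dist y y' - dist (PY.rep (PY.part y)) (PY.rep (PY.part y')))| := by ring_nf
      _ ≤ _ := by
          refine h3.trans ?_
          have hx := abs_nonneg (dist x x' - dist (PX.rep (PX.part x)) (PX.rep (PX.part x')))
          linarith
  -- main perturbation estimate
  have main := l2_perturb w
    (fun i => dist i.1.1 i.2.1 - dist i.1.2 i.2.2)
    (fun i => dist (PX.rep (PX.part i.1.1)) (PX.rep (PX.part i.2.1)) -
        dist (PY.rep (PY.part i.1.2)) (PY.rep (PY.part i.2.2)))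
    (fun i => dist i.1.1 (PX.rep (PX.part i.1.1)) +
        (dist i.2.1 (PX.rep (PX.part i.2.1)) +
          (dist i.1.2 (PY.rep (PY.part i.1.2)) + dist i.2.2 (PY.rep (PY.part i.2.2)))))
    hw hAB
  -- split error norm
  have split : Real.sqrt (∑ i : (X × Y) × (X × Y), w i *
        (dist i.1.1 (PX.rep (PX.part i.1.1)) +
          (dist i.2.1 (PX.rep (PX.part i.2.1)) +
            (dist i.1.2 (PY.rep (PY.part i.1.2)) + dist i.2.2 (PY.rep (PY.part i.2.2))))) ^ 2)
      ≤ 2 * (qEcc (fun x x' => dist x x') μX PX + qEcc (fun y y' => dist y y') μY PY) := by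
    have t1 := l2_tri w (fun i => dist i.1.1 (PX.rep (PX.part i.1.1)))
      (fun i => dist i.2.1 (PX.rep (PX.part i.2.1)) +
        (dist i.1.2 (PY.rep (PY.part i.1.2)) + dist i.2.2 (PY.rep (PY.part i.2.2)))) hw
    have t2 := l2_tri w (fun i => dist i.2.1 (PX.rep (PX.part i.2.1)))
      (fun i => dist i.1.2 (PY.rep (PY.part i.1.2)) + dist i.2.2 (PY.rep (PY.part i.2.2))) hw
    have t3 := l2_tri w (fun i => dist i.1.2 (PY.rep (PY.part i.1.2)))
      (fun i => dist i.2.2 (PY.rep (PY.part i.2.2))) hw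
    rw [b1] at t1
    rw [b2] at t2
    rw [b3, b4] at t3
    linarith
  rw [hGW1, hGW2]
  exact main.trans split

end Core

section Pull
variable {X Y : Type*} [Fintype X] [Fintype Y] {m : ℕ}
  (μX : X → ℝ) (μY : Y → ℝ) (PX : PointedPartition X m) (PY : PointedPartition Y m)

/-- Extension of a coupling of the quantized measures to a coupling of the measures. -/
noncomputable def pullC (μm : Fin m → Fin m → ℝ) (x : X) (y : Y) : ℝ :=
  μm (PX.part x) (PY.part y) * (μX x / blockMass μX PX (PX.part x)) *
    (μY y / blockMass μY PY (PY.part y))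

variable {μm : Fin m → Fin m → ℝ}

lemma mm_row_zero (hμm : IsCoupling (blockMass μX PX) (blockMass μY PY) μm)
    {p q : Fin m} (h0 : blockMass μX PX p = 0) : μm p q = 0 := by
  have h1 := Finset.single_le_sum (f := μm p) (fun i _ => hμm.1 p i) (Finset.mem_univ q)
  rw [hμm.2.1 p, h0] at h1
  exact le_antisymm h1 (hμm.1 p q)

lemma mm_col_zero (hμm : IsCoupling (blockMass μX PX) (blockMass μY PY) μm)
    {p q : Fin m} (h0 : blockMass μY PY q = 0) : μm p q = 0 := by
  have h1 := Finset.single_le_sum (f := fun p' => μm p' q) (fun i _ => hμm.1 i q)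
    (Finset.mem_univ p)
  rw [hμm.2.2 q, h0] at h1
  exact le_antisymm h1 (hμm.1 p q)

lemma mm_div_row (hμm : IsCoupling (blockMass μX PX) (blockMass μY PY) μm) (p q : Fin m) :
    μm p q / blockMass μY PY q * blockMass μY PY q = μm p q := by
  rcases eq_or_ne (blockMass μY PY q) 0 with h0 | h0
  · simp [mm_col_zero μX μY PX PY hμm h0, h0]
  · exact div_mul_cancel₀ _ h0

lemma mm_div_col (hμm : IsCoupling (blockMass μX PX) (blockMass μY PY) μm) (p q : Fin m) :
    μm p q / blockMass μX PX p * blockMass μX PX p = μm p q := by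
  rcases eq_or_ne (blockMass μX PX p) 0 with h0 | h0
  · simp [mm_row_zero μX μY PX PY hμm h0, h0]
  · exact div_mul_cancel₀ _ h0

lemma pullC_isCoupling (hμX : IsProb μX) (hμY : IsProb μY)
    (hμm : IsCoupling (blockMass μX PX) (blockMass μY PY) μm) :
    IsCoupling μX μY (pullC μX μY PX PY μm) := by
  refine ⟨fun x y => ?_, fun x => ?_, fun y => ?_⟩
  · exact mul_nonneg (mul_nonneg (hμm.1 _ _)
      (div_nonneg (hμX.1 x) (mass_nonneg μX PX hμX.1 _)))
      (div_nonneg (hμY.1 y) (mass_nonneg μY PY hμY.1 _))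
  · unfold pullC
    calc (∑ y, μm (PX.part x) (PY.part y) * (μX x / blockMass μX PX (PX.part x)) *
            (μY y / blockMass μY PY (PY.part y)))
        = (∑ y, (fun q => μm (PX.part x) q / blockMass μY PY q) (PY.part y) * μY y) *
            (μX x / blockMass μX PX (PX.part x)) := by
          rw [Finset.sum_mul]
          exact Finset.sum_congr rfl fun y _ => by ring
      _ = (∑ q, (μm (PX.part x) q / blockMass μY PY q) *
            (∑ y, if PY.part y = q then μY y else 0)) *
            (μX x / blockMass μX PX (PX.part x)) := by
          rw [regroup_lin PY.part μY (fun q => μm (PX.part x) q / blockMass μY PY q)]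
      _ = (∑ q, μm (PX.part x) q) * (μX x / blockMass μX PX (PX.part x)) := by
          congr 1
          exact Finset.sum_congr rfl fun q _ => mm_div_row μX μY PX PY hμm _ q
      _ = μX x := by
          rw [hμm.2.1, mul_comm]
          exact div_mass_mul μX PX hμX.1 rfl
  · unfold pullC
    calc (∑ x, μm (PX.part x) (PY.part y) * (μX x / blockMass μX PX (PX.part x)) *
            (μY y / blockMass μY PY (PY.part y)))
        = (∑ x, (fun p => μm p (PY.part y) / blockMass μX PX p) (PX.part x) * μX x) *
            (μY y / blockMass μY PY (PY.part y)) := by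
          rw [Finset.sum_mul]
          exact Finset.sum_congr rfl fun x _ => by ring
      _ = (∑ p, (μm p (PY.part y) / blockMass μX PX p) *
            (∑ x, if PX.part x = p then μX x else 0)) *
            (μY y / blockMass μY PY (PY.part y)) := by
          rw [regroup_lin PX.part μX (fun p => μm p (PY.part y) / blockMass μX PX p)]
      _ = (∑ p, μm p (PY.part y)) * (μY y / blockMass μY PY (PY.part y)) := by
          congr 1
          exact Finset.sum_congr rfl fun p _ => mm_div_col μX μY PX PY hμm p _
      _ = μY y := by
          rw [hμm.2.2, mul_comm]
          exact div_mass_mul μY PY hμY.1 rfl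

lemma pushC_pullC (hμX : IsProb μX) (hμY : IsProb μY)
    (hμm : IsCoupling (blockMass μX PX) (blockMass μY PY) μm) (p q : Fin m) :
    pushC PX PY (pullC μX μY PX PY μm) p q = μm p q := by
  unfold pushC
  rw [Fintype.sum_prod_type]
  simp only [Prod.mk.injEq, ite_and]
  have step : ∀ (x : X) (y : Y),
      (if PX.part x = p then if PY.part y = q then pullC μX μY PX PY μm x y else 0 else 0)
      = μm p q * ((if PX.part x = p then μX x else 0) / blockMass μX PX p) *
          ((if PY.part y = q then μY y else 0) / blockMass μY PY q) := by
    intro x y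
    unfold pullC
    split_ifs with hx hy
    · rw [hx, hy]
    all_goals simp
  simp_rw [step]
  have factor : (∑ x, ∑ y, μm p q * ((if PX.part x = p then μX x else 0) / blockMass μX PX p) *
      ((if PY.part y = q then μY y else 0) / blockMass μY PY q))
      = μm p q * ((∑ x, if PX.part x = p then μX x else 0) / blockMass μX PX p) *
        ((∑ y, if PY.part y = q then μY y else 0) / blockMass μY PY q) := by
    have hx : ∀ x : X, (∑ y, μm p q * ((if PX.part x = p then μX x else 0) / blockMass μX PX p) *
        ((if PY.part y = q then μY y else 0) / blockMass μY PY q))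
        = μm p q * ((if PX.part x = p then μX x else 0) / blockMass μX PX p) *
          (∑ y, (if PY.part y = q then μY y else 0) / blockMass μY PY q) :=
      fun x => (Finset.mul_sum _ _ _).symm
    simp_rw [hx, ← Finset.sum_mul, ← Finset.mul_sum, ← Finset.sum_div]
  rw [factor]
  rcases eq_or_ne (blockMass μX PX p) 0 with h0 | h0
  · simp [mm_row_zero μX μY PX PY hμm h0, h0]
  rcases eq_or_ne (blockMass μY PY q) 0 with h1 | h1
  · simp [mm_col_zero μX μY PX PY hμm h1, h1]
  rw [show (∑ x, if PX.part x = p then μX x else 0) = blockMass μX PX p from rfl,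
    show (∑ y, if PY.part y = q then μY y else 0) = blockMass μY PY q from rfl,
    div_self h0, div_self h1, mul_one, mul_one]

end Pull

section Final
variable {X Y : Type*} [Fintype X] [Fintype Y] {m : ℕ}

lemma prodC_isCoupling (μX : X → ℝ) (μY : Y → ℝ) (hμX : IsProb μX) (hμY : IsProb μY) :
    IsCoupling μX μY (fun x y => μX x * μY y) := by
  refine ⟨fun x y => mul_nonneg (hμX.1 x) (hμY.1 y), fun x => ?_, fun y => ?_⟩
  · rw [← Finset.mul_sum, hμY.2, mul_one]
  · rw [← Finset.sum_mul, hμX.2, one_mul]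

lemma mass_isProb (μX : X → ℝ) (hμX : IsProb μX) (PX : PointedPartition X m) :
    IsProb (blockMass μX PX) :=
  ⟨mass_nonneg μX PX hμX.1, by rw [sum_mass]; exact hμX.2⟩

end Final

/-- `|d_GW(X,Y) − d_GW(Xᵐ,Yᵐ)| ≤ 2 (q(P_X) + q(P_Y))`. -/
theorem abs_dGW_diff_le_two_qEcc
    {X Y : Type*} [Fintype X] [Fintype Y] [MetricSpace X] [MetricSpace Y] {m : ℕ}
    (μX : X → ℝ) (μY : Y → ℝ) (hμX : IsProb μX) (hμY : IsProb μY)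
    (PX : PointedPartition X m) (PY : PointedPartition Y m) :
    |dGW (fun x x' => dist x x') (fun y y' => dist y y') μX μY -
        dGW (fun p q => dist (PX.rep p) (PX.rep q))
          (fun p q => dist (PY.rep p) (PY.rep q))
          (blockMass μX PX) (blockMass μY PY)| ≤
      2 * (qEcc (fun x x' => dist x x') μX PX + qEcc (fun y y' => dist y y') μY PY) := by
  classical
  set c := 2 * (qEcc (fun x x' => dist x x') μX PX + qEcc (fun y y' => dist y y') μY PY)
    with hc
  set S1 := {r : ℝ | ∃ μ, IsCoupling μX μY μ ∧
    r = Real.sqrt (GWLoss (fun x x' => dist x x') (fun y y' => dist y y') μ)} with hS1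
  set S2 := {r : ℝ | ∃ μ, IsCoupling (blockMass μX PX) (blockMass μY PY) μ ∧
    r = Real.sqrt (GWLoss (fun p q => dist (PX.rep p) (PX.rep q))
      (fun p q => dist (PY.rep p) (PY.rep q)) μ)} with hS2
  have hne1 : S1.Nonempty :=
    ⟨_, ⟨fun x y => μX x * μY y, prodC_isCoupling μX μY hμX hμY, rfl⟩⟩
  have hne2 : S2.Nonempty :=
    ⟨_, ⟨fun p q => blockMass μX PX p * blockMass μY PY q,
      prodC_isCoupling _ _ (mass_isProb μX hμX PX) (mass_isProb μY hμY PY), rfl⟩⟩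
  have hbdd1 : BddBelow S1 := ⟨0, by rintro r ⟨μ, -, rfl⟩; exact Real.sqrt_nonneg _⟩
  have hbdd2 : BddBelow S2 := ⟨0, by rintro r ⟨μ, -, rfl⟩; exact Real.sqrt_nonneg _⟩
  have key2 : ∀ r ∈ S1, sInf S2 ≤ r + c := by
    rintro r ⟨μ, hcoup, rfl⟩
    have hmem : Real.sqrt (GWLoss (fun p q => dist (PX.rep p) (PX.rep q))
        (fun p q => dist (PY.rep p) (PY.rep q)) (pushC PX PY μ)) ∈ S2 :=
      ⟨pushC PX PY μ, pushC_isCoupling PX PY μ hcoup, rfl⟩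
    have hcore := core μX μY hμX hμY PX PY μ hcoup
    rw [abs_le] at hcore
    have := csInf_le hbdd2 hmem
    rw [← hc] at hcore
    linarith [hcore.1]
  have key1 : ∀ r ∈ S2, sInf S1 ≤ r + c := by
    rintro r ⟨μm, hμm, rfl⟩
    have hcoup := pullC_isCoupling μX μY PX PY hμX hμY hμm
    have hmem : Real.sqrt (GWLoss (fun x x' => dist x x') (fun y y' => dist y y')
        (pullC μX μY PX PY μm)) ∈ S1 :=
      ⟨pullC μX μY PX PY μm, hcoup, rfl⟩
    have hcore := core μX μY hμX hμY PX PY (pullC μX μY PX PY μm) hcoup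
    have hpp : pushC PX PY (pullC μX μY PX PY μm) = μm :=
      funext fun p => funext fun q => pushC_pullC μX μY PX PY hμX hμY hμm p q
    rw [hpp, abs_le] at hcore
    have := csInf_le hbdd1 hmem
    rw [← hc] at hcore
    linarith [hcore.2]
  have h12 : sInf S1 - c ≤ sInf S2 :=
    le_csInf hne2 fun r hr => by linarith [key1 r hr]
  have h21 : sInf S2 - c ≤ sInf S1 :=
    le_csInf hne1 fun r hr => by linarith [key2 r hr]
  have hgoal : |sInf S1 - sInf S2| ≤ c := by
    rw [abs_le]
    constructor <;> linarith
  exact hgoal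
end

section
/- Let X and Y be finite metric measure spaces with m-pointed partitions P_X and P_Y whose partition blocks all have metric diameter at most ε > 0. For any coupling μ ∈ C(μ_X, μ_Y), let GW(μ) = Σ J(x,y,x',y')² μ(x,y)μ(x',y') and GW*(μ) = Σ J*(x,y,x',y')² μ(x,y)μ(x',y'), where J(x,y,x',y') = d_X(x,x') − d_Y(y,y') and, for x ∈ Uᵖ, x' ∈ U^{p'}, y ∈ V^q, y' ∈ V^{q'}, J*(x,y,x',y') = d_X(x,xᵖ) + d_X(xᵖ,x^{p'}) + d_X(x^{p'},x') − d_Y(y,y^q) − d_Y(y^q,y^{q'}) − d_Y(y^{q'},y'). Then |GW(μ)^{1/2} − GW*(μ)^{1/2}| ≤ 6ε. -/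
open Finset

/-- `J*(x,y,x',y')`: the approximation of `d_X(x,x') − d_Y(y,y')` obtained by routing
through the representatives of the blocks containing the points. -/
noncomputable def Jstar {X Y : Type*} [MetricSpace X] [MetricSpace Y] {m : ℕ}
    (PX : PointedPartition X m) (PY : PointedPartition Y m)
    (x : X) (y : Y) (x' : X) (y' : Y) : ℝ :=
  dist x (PX.rep (PX.part x)) + dist (PX.rep (PX.part x)) (PX.rep (PX.part x')) +
      dist (PX.rep (PX.part x')) x' -
    dist y (PY.rep (PY.part y)) - dist (PY.rep (PY.part y)) (PY.rep (PY.part y')) -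
      dist (PY.rep (PY.part y')) y'

/-- The loss `GW*(μ) = Σ J*(x,y,x',y')² μ(x,y) μ(x',y')`. -/
noncomputable def GWStarLoss {X Y : Type*} [Fintype X] [Fintype Y]
    [MetricSpace X] [MetricSpace Y] {m : ℕ}
    (PX : PointedPartition X m) (PY : PointedPartition Y m) (μ : X → Y → ℝ) : ℝ :=
  ∑ x, ∑ y, ∑ x', ∑ y', Jstar PX PY x y x' y' ^ 2 * μ x y * μ x' y'

/-- L² triangle inequality for finite sums. -/
lemma l2_triangle {ι : Type*} (s : Finset ι) (f g : ι → ℝ) :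
    Real.sqrt (∑ i ∈ s, (f i + g i) ^ 2) ≤
      Real.sqrt (∑ i ∈ s, f i ^ 2) + Real.sqrt (∑ i ∈ s, g i ^ 2) := by
  have hA : 0 ≤ ∑ i ∈ s, f i ^ 2 := Finset.sum_nonneg fun i _ => sq_nonneg _
  have hB : 0 ≤ ∑ i ∈ s, g i ^ 2 := Finset.sum_nonneg fun i _ => sq_nonneg _
  have hCS := Real.sum_mul_le_sqrt_mul_sqrt s f g
  have key : ∑ i ∈ s, (f i + g i) ^ 2 ≤
      (Real.sqrt (∑ i ∈ s, f i ^ 2) + Real.sqrt (∑ i ∈ s, g i ^ 2)) ^ 2 := by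
    have hexp : ∑ i ∈ s, (f i + g i) ^ 2 =
        (∑ i ∈ s, f i ^ 2) + 2 * (∑ i ∈ s, f i * g i) + (∑ i ∈ s, g i ^ 2) := by
      simp_rw [add_sq, mul_assoc]
      rw [Finset.sum_add_distrib, Finset.sum_add_distrib, ← Finset.mul_sum]
    rw [hexp, add_sq, Real.sq_sqrt hA, Real.sq_sqrt hB]
    nlinarith [Real.sqrt_nonneg (∑ i ∈ s, f i ^ 2), Real.sqrt_nonneg (∑ i ∈ s, g i ^ 2)]
  calc Real.sqrt (∑ i ∈ s, (f i + g i) ^ 2)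
      ≤ Real.sqrt ((Real.sqrt (∑ i ∈ s, f i ^ 2) + Real.sqrt (∑ i ∈ s, g i ^ 2)) ^ 2) :=
        Real.sqrt_le_sqrt key
    _ = _ := Real.sqrt_sq (by positivity)

/-- Key abstract lemma: weighted L² seminorms of uniformly close functions are close. -/
lemma sqrt_weighted_close {ι : Type*} [Fintype ι] (w a b : ι → ℝ) (c : ℝ) (hc : 0 ≤ c)
    (hw : ∀ i, 0 ≤ w i) (hsum : ∑ i, w i ≤ 1) (hab : ∀ i, |a i - b i| ≤ c) :
    |Real.sqrt (∑ i, a i ^ 2 * w i) - Real.sqrt (∑ i, b i ^ 2 * w i)| ≤ c := by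
  set f : ι → ℝ := fun i => a i * Real.sqrt (w i) with hf
  set g : ι → ℝ := fun i => b i * Real.sqrt (w i) with hg
  have hfsq : ∀ i, f i ^ 2 = a i ^ 2 * w i := fun i => by
    rw [hf, mul_pow, Real.sq_sqrt (hw i)]
  have hgsq : ∀ i, g i ^ 2 = b i ^ 2 * w i := fun i => by
    rw [hg, mul_pow, Real.sq_sqrt (hw i)]
  have hfg : ∀ i, (f i - g i) ^ 2 = (a i - b i) ^ 2 * w i := fun i => by
    rw [hf, hg, ← sub_mul, mul_pow, Real.sq_sqrt (hw i)]
  have hdiff : Real.sqrt (∑ i, (f i - g i) ^ 2) ≤ c := by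
    have h1 : ∑ i, (f i - g i) ^ 2 ≤ c ^ 2 := by
      calc ∑ i, (f i - g i) ^ 2 = ∑ i, (a i - b i) ^ 2 * w i := by
              simp_rw [hfg]
        _ ≤ ∑ i, c ^ 2 * w i := by
              refine Finset.sum_le_sum fun i _ => ?_
              have := hab i
              have h2 : (a i - b i) ^ 2 ≤ c ^ 2 := by
                have := abs_nonneg (a i - b i)
                nlinarith [sq_abs (a i - b i)]
              exact mul_le_mul_of_nonneg_right h2 (hw i)
        _ = c ^ 2 * ∑ i, w i := by rw [Finset.mul_sum]
        _ ≤ c ^ 2 * 1 := by nlinarith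
        _ = c ^ 2 := mul_one _
    calc Real.sqrt (∑ i, (f i - g i) ^ 2) ≤ Real.sqrt (c ^ 2) := Real.sqrt_le_sqrt h1
      _ = c := Real.sqrt_sq hc
  have hA : ∑ i, a i ^ 2 * w i = ∑ i, f i ^ 2 := by simp_rw [hfsq]
  have hB : ∑ i, b i ^ 2 * w i = ∑ i, g i ^ 2 := by simp_rw [hgsq]
  rw [hA, hB, abs_sub_le_iff]
  constructor
  · have h1 : Real.sqrt (∑ i, f i ^ 2) ≤
        Real.sqrt (∑ i, g i ^ 2) + Real.sqrt (∑ i, (f i - g i) ^ 2) := by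
      have := l2_triangle Finset.univ g (fun i => f i - g i)
      simpa using this
    linarith
  · have h1 : Real.sqrt (∑ i, g i ^ 2) ≤
        Real.sqrt (∑ i, f i ^ 2) + Real.sqrt (∑ i, (g i - f i) ^ 2) := by
      have := l2_triangle Finset.univ f (fun i => g i - f i)
      simpa using this
    have h2 : ∑ i, (g i - f i) ^ 2 = ∑ i, (f i - g i) ^ 2 := by
      congr 1; ext i; ring
    rw [h2] at h1
    linarith

/-- `|GW(μ)^{1/2} − GW*(μ)^{1/2}| ≤ 6ε` for any coupling `μ`, when all
partition blocks have diameter at most `ε`. -/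
theorem abs_sqrt_GWLoss_sub_sqrt_GWStarLoss_le
    {X Y : Type*} [Fintype X] [Fintype Y] [MetricSpace X] [MetricSpace Y] {m : ℕ}
    (μX : X → ℝ) (μY : Y → ℝ) (hμX : IsProb μX) (hμY : IsProb μY)
    (PX : PointedPartition X m) (PY : PointedPartition Y m)
    (ε : ℝ) (hε : 0 < ε)
    (hdiamX : ∀ x x' : X, PX.part x = PX.part x' → dist x x' ≤ ε)
    (hdiamY : ∀ y y' : Y, PY.part y = PY.part y' → dist y y' ≤ ε)
    (μ : X → Y → ℝ) (hμ : IsCoupling μX μY μ) :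
    |Real.sqrt (GWLoss (fun x x' => dist x x') (fun y y' => dist y y') μ) -
        Real.sqrt (GWStarLoss PX PY μ)| ≤ 6 * ε := by
  classical
  set ι := X × Y × X × Y
  set w : ι → ℝ := fun i => μ i.1 i.2.1 * μ i.2.2.1 i.2.2.2 with hw_def
  set a : ι → ℝ := fun i => dist i.1 i.2.2.1 - dist i.2.1 i.2.2.2 with ha_def
  set b : ι → ℝ := fun i => Jstar PX PY i.1 i.2.1 i.2.2.1 i.2.2.2 with hb_def
  have hμnn := hμ.1
  have hμrow := hμ.2.1
  have hwnn : ∀ i : ι, 0 ≤ w i := fun i => mul_nonneg (hμnn _ _) (hμnn _ _)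
  have htot : ∑ x, ∑ y, μ x y = 1 := by
    rw [show (∑ x, ∑ y, μ x y) = ∑ x, μX x from Finset.sum_congr rfl fun x _ => hμrow x]
    exact hμX.2
  have hsum : ∑ i : ι, w i ≤ 1 := by
    have : ∑ i : ι, w i = (∑ x, ∑ y, μ x y) * (∑ x', ∑ y', μ x' y') := by
      rw [Fintype.sum_prod_type, Finset.sum_mul]
      refine Finset.sum_congr rfl fun x _ => ?_
      rw [Fintype.sum_prod_type, Finset.sum_mul]
      refine Finset.sum_congr rfl fun y _ => ?_
      rw [Fintype.sum_prod_type, Finset.mul_sum]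
      refine Finset.sum_congr rfl fun x' _ => ?_
      rw [Finset.mul_sum]
    rw [this, htot, one_mul]
  have hGW : GWLoss (fun x x' => dist x x') (fun y y' => dist y y') μ =
      ∑ i : ι, a i ^ 2 * w i := by
    rw [GWLoss, Fintype.sum_prod_type]
    refine Finset.sum_congr rfl fun x _ => ?_
    rw [Fintype.sum_prod_type]
    refine Finset.sum_congr rfl fun y _ => ?_
    rw [Fintype.sum_prod_type]
    refine Finset.sum_congr rfl fun x' _ => ?_
    refine Finset.sum_congr rfl fun y' _ => ?_
    simp [ha_def, hw_def, mul_assoc]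
  have hGWs : GWStarLoss PX PY μ = ∑ i : ι, b i ^ 2 * w i := by
    rw [GWStarLoss, Fintype.sum_prod_type]
    refine Finset.sum_congr rfl fun x _ => ?_
    rw [Fintype.sum_prod_type]
    refine Finset.sum_congr rfl fun y _ => ?_
    rw [Fintype.sum_prod_type]
    refine Finset.sum_congr rfl fun x' _ => ?_
    refine Finset.sum_congr rfl fun y' _ => ?_
    simp [hb_def, hw_def, mul_assoc]
  have hab : ∀ i : ι, |a i - b i| ≤ 6 * ε := by
    rintro ⟨x, y, x', y'⟩
    have hxr : dist x (PX.rep (PX.part x)) ≤ ε := hdiamX _ _ (by rw [PX.part_rep])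
    have hx'r : dist (PX.rep (PX.part x')) x' ≤ ε := hdiamX _ _ (PX.part_rep _)
    have hyr : dist y (PY.rep (PY.part y)) ≤ ε := hdiamY _ _ (by rw [PY.part_rep])
    have hy'r : dist (PY.rep (PY.part y')) y' ≤ ε := hdiamY _ _ (PY.part_rep _)
    have hXlo := dist_triangle4 x (PX.rep (PX.part x)) (PX.rep (PX.part x')) x'
    have hXhi := dist_triangle4 (PX.rep (PX.part x)) x x' (PX.rep (PX.part x'))
    have hYlo := dist_triangle4 y (PY.rep (PY.part y)) (PY.rep (PY.part y')) y'
    have hYhi := dist_triangle4 (PY.rep (PY.part y)) y y' (PY.rep (PY.part y'))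
    rw [dist_comm (PX.rep (PX.part x)) x, dist_comm x' (PX.rep (PX.part x'))] at hXhi
    rw [dist_comm (PY.rep (PY.part y)) y, dist_comm y' (PY.rep (PY.part y'))] at hYhi
    simp only [ha_def, hb_def, Jstar]
    rw [abs_le]
    constructor <;> linarith
  rw [hGW, hGWs]
  exact sqrt_weighted_close w a b (6 * ε) (by linarith) hwnn hsum hab
end

section
/- Let X and Y be finite metric measure spaces with m-pointed partitions P_X and P_Y whose partition blocks all have metric diameter at most ε > 0, and quantized representations Xᵐ and Yᵐ. Let μ = Σ_{p,q} μ_m(xᵖ,y^q) μ̄_{xᵖ,y^q} be a quantization coupling whose global component μ_m minimizes the Gromov–Wasserstein loss over C(μ_{P_X}, μ_{P_Y}), i.e. GW(μ_m)^{1/2} = d_GW(Xᵐ, Yᵐ). Define GW*(μ) = Σ_{x,y,x',y'} J*(x,y,x',y')² μ(x,y)μ(x',y'), where, for x ∈ Uᵖ, x' ∈ U^{p'}, y ∈ V^q, y' ∈ V^{q'}, J*(x,y,x',y') = d_X(x,xᵖ) + d_X(xᵖ,x^{p'}) + d_X(x^{p'},x') − d_Y(y,y^q) − d_Y(y^q,y^{q'})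 − d_Y(y^{q'},y'). Then GW*(μ)^{1/2} ≤ 2ε + d_GW(Xᵐ, Yᵐ). -/
open Finset

lemma minkowski_weighted {ι : Type*} [Fintype ι] (u v w : ι → ℝ) (hw : ∀ i, 0 ≤ w i) :
    Real.sqrt (∑ i, (u i + v i) ^ 2 * w i) ≤
      Real.sqrt (∑ i, u i ^ 2 * w i) + Real.sqrt (∑ i, v i ^ 2 * w i) := by
  have hU : 0 ≤ ∑ i, u i ^ 2 * w i :=
    Finset.sum_nonneg fun i _ => mul_nonneg (sq_nonneg _) (hw i)
  have hV : 0 ≤ ∑ i, v i ^ 2 * w i :=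
    Finset.sum_nonneg fun i _ => mul_nonneg (sq_nonneg _) (hw i)
  set U := Real.sqrt (∑ i, u i ^ 2 * w i)
  set V := Real.sqrt (∑ i, v i ^ 2 * w i)
  have hU0 : 0 ≤ U := Real.sqrt_nonneg _
  have hV0 : 0 ≤ V := Real.sqrt_nonneg _
  have hcross : ∑ i, u i * v i * w i ≤ U * V := by
    have h1 : ∀ i : ι, u i * v i * w i =
        (u i * Real.sqrt (w i)) * (v i * Real.sqrt (w i)) := by
      intro i
      rw [mul_mul_mul_comm, Real.mul_self_sqrt (hw i)]
    have h2 : ∀ i : ι, (u i * Real.sqrt (w i)) ^ 2 = u i ^ 2 * w i := by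
      intro i; rw [mul_pow, Real.sq_sqrt (hw i)]
    have h3 : ∀ i : ι, (v i * Real.sqrt (w i)) ^ 2 = v i ^ 2 * w i := by
      intro i; rw [mul_pow, Real.sq_sqrt (hw i)]
    calc ∑ i, u i * v i * w i
        = ∑ i, (u i * Real.sqrt (w i)) * (v i * Real.sqrt (w i)) :=
          Finset.sum_congr rfl fun i _ => h1 i
      _ ≤ |∑ i, (u i * Real.sqrt (w i)) * (v i * Real.sqrt (w i))| := le_abs_self _
      _ = Real.sqrt ((∑ i, (u i * Real.sqrt (w i)) * (v i * Real.sqrt (w i))) ^ 2) :=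
          (Real.sqrt_sq_eq_abs _).symm
      _ ≤ Real.sqrt ((∑ i, (u i * Real.sqrt (w i)) ^ 2) * ∑ i, (v i * Real.sqrt (w i)) ^ 2) :=
          Real.sqrt_le_sqrt (Finset.sum_mul_sq_le_sq_mul_sq _ _ _)
      _ = U * V := by
          simp_rw [h2, h3]
          exact Real.sqrt_mul hU _
  have hexp : ∑ i, (u i + v i) ^ 2 * w i ≤ (U + V) ^ 2 := by
    have heq : ∑ i, (u i + v i) ^ 2 * w i
        = (∑ i, u i ^ 2 * w i) + 2 * (∑ i, u i * v i * w i) + ∑ i, v i ^ 2 * w i := by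
      rw [Finset.mul_sum, ← Finset.sum_add_distrib, ← Finset.sum_add_distrib]
      exact Finset.sum_congr rfl fun i _ => by ring
    have hUsq : U ^ 2 = ∑ i, u i ^ 2 * w i := Real.sq_sqrt hU
    have hVsq : V ^ 2 = ∑ i, v i ^ 2 * w i := Real.sq_sqrt hV
    nlinarith [hcross]
  calc Real.sqrt (∑ i, (u i + v i) ^ 2 * w i) ≤ Real.sqrt ((U + V) ^ 2) :=
        Real.sqrt_le_sqrt hexp
    _ = U + V := Real.sqrt_sq (add_nonneg hU0 hV0)

lemma minkowski4 {X Y : Type*} [Fintype X] [Fintype Y]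
    (u v w : X → Y → X → Y → ℝ) (hw : ∀ a b c d, 0 ≤ w a b c d) :
    Real.sqrt (∑ a, ∑ b, ∑ c, ∑ d, (u a b c d + v a b c d) ^ 2 * w a b c d) ≤
      Real.sqrt (∑ a, ∑ b, ∑ c, ∑ d, u a b c d ^ 2 * w a b c d) +
        Real.sqrt (∑ a, ∑ b, ∑ c, ∑ d, v a b c d ^ 2 * w a b c d) := by
  have h := minkowski_weighted (ι := X × Y × X × Y)
    (fun z => u z.1 z.2.1 z.2.2.1 z.2.2.2) (fun z => v z.1 z.2.1 z.2.2.1 z.2.2.2)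
    (fun z => w z.1 z.2.1 z.2.2.1 z.2.2.2) (fun z => hw _ _ _ _)
  simpa only [Fintype.sum_prod_type] using h

lemma nu_zero_left {X Y : Type*} [Fintype X] [Fintype Y] {m : ℕ}
    {μX : X → ℝ} {μY : Y → ℝ} {PX : PointedPartition X m} {PY : PointedPartition Y m}
    {p q : Fin m} {ν : X → Y → ℝ}
    (h : IsCoupling (blockMeasure μX PX p) (blockMeasure μY PY q) ν)
    {x : X} (hx : PX.part x ≠ p) (y : Y) : ν x y = 0 := by
  have hrow := h.2.1 x
  have hz : blockMeasure μX PX p x = 0 := by simp [blockMeasure, hx]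
  have hzero : ∑ y', ν x y' = 0 := by rw [hrow, hz]
  exact (Finset.sum_eq_zero_iff_of_nonneg fun y' _ => h.1 x y').mp hzero y (Finset.mem_univ y)

lemma nu_zero_right {X Y : Type*} [Fintype X] [Fintype Y] {m : ℕ}
    {μX : X → ℝ} {μY : Y → ℝ} {PX : PointedPartition X m} {PY : PointedPartition Y m}
    {p q : Fin m} {ν : X → Y → ℝ}
    (h : IsCoupling (blockMeasure μX PX p) (blockMeasure μY PY q) ν)
    {y : Y} (hy : PY.part y ≠ q) (x : X) : ν x y = 0 := by
  have hcol := h.2.2 y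
  have hz : blockMeasure μY PY q y = 0 := by simp [blockMeasure, hy]
  have hzero : ∑ x', ν x' y = 0 := by rw [hcol, hz]
  exact (Finset.sum_eq_zero_iff_of_nonneg fun x' _ => h.1 x' y).mp hzero x (Finset.mem_univ x)

/-- for a quantization coupling whose global component is an optimal
coupling of the quantized representations, `GW*(μ)^{1/2} ≤ 2ε + d_GW(Xᵐ,Yᵐ)`. -/
theorem sqrt_GWStarLoss_le_of_optimal_global
    {X Y : Type*} [Fintype X] [Fintype Y] [MetricSpace X] [MetricSpace Y] {m : ℕ}
    (μX : X → ℝ) (μY : Y → ℝ) (hμX : IsProb μX) (hμY : IsProb μY)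
    (PX : PointedPartition X m) (PY : PointedPartition Y m)
    (ε : ℝ) (hε : 0 < ε)
    (hdiamX : ∀ x x' : X, PX.part x = PX.part x' → dist x x' ≤ ε)
    (hdiamY : ∀ y y' : Y, PY.part y = PY.part y' → dist y y' ≤ ε)
    (μm : Fin m → Fin m → ℝ) (ν : Fin m → Fin m → X → Y → ℝ)
    (hμm : IsCoupling (blockMass μX PX) (blockMass μY PY) μm)
    (hν : ∀ p q, IsCoupling (blockMeasure μX PX p) (blockMeasure μY PY q) (ν p q))
    (hνpos : ∀ p q, 0 < ν p q (PX.rep p) (PY.rep q))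
    (hopt : Real.sqrt (GWLoss (fun p p' => dist (PX.rep p) (PX.rep p'))
          (fun q q' => dist (PY.rep q) (PY.rep q')) μm) =
        dGW (fun p p' => dist (PX.rep p) (PX.rep p'))
          (fun q q' => dist (PY.rep q) (PY.rep q'))
          (blockMass μX PX) (blockMass μY PY)) :
    Real.sqrt (GWStarLoss PX PY (fun x y => ∑ p, ∑ q, μm p q * ν p q x y)) ≤
      2 * ε + dGW (fun p p' => dist (PX.rep p) (PX.rep p'))
        (fun q q' => dist (PY.rep q) (PY.rep q'))
        (blockMass μX PX) (blockMass μY PY)  := by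
  classical
  -- abbreviations
  set μ' : X → Y → ℝ := fun x y => ∑ p, ∑ q, μm p q * ν p q x y with hμ'def
  have hμ'app : ∀ x y, μ' x y = ∑ p, ∑ q, μm p q * ν p q x y := fun x y => rfl
  have hμ'0 : ∀ x y, 0 ≤ μ' x y := fun x y =>
    Finset.sum_nonneg fun p _ => Finset.sum_nonneg fun q _ =>
      mul_nonneg (hμm.1 p q) ((hν p q).1 x y)
  -- block masses are nonzero
  have hMX : ∀ p : Fin m, blockMass μX PX p ≠ 0 := by
    intro p h0
    have hpos := hνpos p p
    have hrow := (hν p p).2.1 (PX.rep p)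
    have hle : ν p p (PX.rep p) (PY.rep p) ≤ ∑ y, ν p p (PX.rep p) y :=
      Finset.single_le_sum (fun y _ => (hν p p).1 _ y) (Finset.mem_univ _)
    have hbm : 0 < blockMeasure μX PX p (PX.rep p) := lt_of_lt_of_le hpos (hle.trans_eq hrow)
    rw [blockMeasure, PX.part_rep, if_pos rfl, h0, div_zero] at hbm
    exact lt_irrefl 0 hbm
  -- total mass of each local coupling is 1
  have totalν : ∀ p q, (∑ x, ∑ y, ν p q x y) = 1 := by
    intro p q
    have hrow : ∀ x, (∑ y, ν p q x y) = blockMeasure μX PX p x := (hν p q).2.1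
    calc (∑ x, ∑ y, ν p q x y) = ∑ x, blockMeasure μX PX p x :=
          Finset.sum_congr rfl fun x _ => hrow x
      _ = blockMass μX PX p / blockMass μX PX p := by
          rw [blockMass, Finset.sum_div]
          exact Finset.sum_congr rfl fun x _ => by
            by_cases h : PX.part x = p <;> simp [blockMeasure, blockMass, h]
      _ = 1 := div_self (hMX p)
  -- marginalization to the quantized spaces
  have sumPart : ∀ f : Fin m → Fin m → ℝ,
      (∑ x, ∑ y, f (PX.part x) (PY.part y) * μ' x y) = ∑ p, ∑ q, f p q * μm p q := by
    intro f
    have point : ∀ (x : X) (y : Y) (p q : Fin m),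
        f (PX.part x) (PY.part y) * (μm p q * ν p q x y)
          = f p q * (μm p q * ν p q x y) := by
      intro x y p q
      by_cases hx : PX.part x = p
      · by_cases hy : PY.part y = q
        · rw [hx, hy]
        · rw [nu_zero_right (hν p q) hy x]; ring
      · rw [nu_zero_left (hν p q) hx y]; ring
    calc (∑ x, ∑ y, f (PX.part x) (PY.part y) * μ' x y)
        = ∑ x, ∑ y, ∑ p, ∑ q, f (PX.part x) (PY.part y) * (μm p q * ν p q x y) := by
          simp_rw [hμ'app, Finset.mul_sum]
      _ = ∑ x, ∑ y, ∑ p, ∑ q, f p q * (μm p q * ν p q x y) := by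
          exact Finset.sum_congr rfl fun x _ => Finset.sum_congr rfl fun y _ =>
            Finset.sum_congr rfl fun p _ => Finset.sum_congr rfl fun q _ => point x y p q
      _ = ∑ x, ∑ p, ∑ y, ∑ q, f p q * (μm p q * ν p q x y) :=
          Finset.sum_congr rfl fun x _ => Finset.sum_comm
      _ = ∑ p, ∑ x, ∑ y, ∑ q, f p q * (μm p q * ν p q x y) := Finset.sum_comm
      _ = ∑ p, ∑ x, ∑ q, ∑ y, f p q * (μm p q * ν p q x y) :=
          Finset.sum_congr rfl fun p _ => Finset.sum_congr rfl fun x _ => Finset.sum_comm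
      _ = ∑ p, ∑ q, ∑ x, ∑ y, f p q * (μm p q * ν p q x y) :=
          Finset.sum_congr rfl fun p _ => Finset.sum_comm
      _ = ∑ p, ∑ q, f p q * μm p q := by
          refine Finset.sum_congr rfl fun p _ => Finset.sum_congr rfl fun q _ => ?_
          simp_rw [← Finset.mul_sum]
          rw [totalν p q, mul_one]
  have sumPart2 : ∀ g : Fin m → Fin m → Fin m → Fin m → ℝ,
      (∑ x, ∑ y, ∑ x', ∑ y',
          g (PX.part x) (PY.part y) (PX.part x') (PY.part y') * μ' x y * μ' x' y')
        = ∑ p, ∑ q, ∑ p', ∑ q', g p q p' q' * μm p q * μm p' q' := by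
    intro g
    have inner : ∀ x y, (∑ x', ∑ y',
        g (PX.part x) (PY.part y) (PX.part x') (PY.part y') * μ' x y * μ' x' y')
          = (∑ p', ∑ q', g (PX.part x) (PY.part y) p' q' * μm p' q') * μ' x y := by
      intro x y
      have h := sumPart (fun p' q' => g (PX.part x) (PY.part y) p' q' * μ' x y)
      rw [h]
      simp_rw [Finset.sum_mul]
      exact Finset.sum_congr rfl fun p' _ => Finset.sum_congr rfl fun q' _ => by ring
    calc (∑ x, ∑ y, ∑ x', ∑ y',
            g (PX.part x) (PY.part y) (PX.part x') (PY.part y') * μ' x y * μ' x' y')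
        = ∑ x, ∑ y, (∑ p', ∑ q', g (PX.part x) (PY.part y) p' q' * μm p' q') * μ' x y :=
          Finset.sum_congr rfl fun x _ => Finset.sum_congr rfl fun y _ => inner x y
      _ = ∑ p, ∑ q, (∑ p', ∑ q', g p q p' q' * μm p' q') * μm p q :=
          sumPart (fun p q => ∑ p', ∑ q', g p q p' q' * μm p' q')
      _ = ∑ p, ∑ q, ∑ p', ∑ q', g p q p' q' * μm p q * μm p' q' := by
          refine Finset.sum_congr rfl fun p _ => Finset.sum_congr rfl fun q _ => ?_
          simp_rw [Finset.sum_mul]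
          exact Finset.sum_congr rfl fun p' _ => Finset.sum_congr rfl fun q' _ => by ring
  -- total mass of μm is 1
  have sumμm : (∑ p, ∑ q, μm p q) = 1 := by
    have hrow : ∀ p, (∑ q, μm p q) = blockMass μX PX p := hμm.2.1
    calc (∑ p, ∑ q, μm p q) = ∑ p, blockMass μX PX p :=
          Finset.sum_congr rfl fun p _ => hrow p
      _ = ∑ p, ∑ x, if PX.part x = p then μX x else 0 := rfl
      _ = ∑ x, ∑ p, if PX.part x = p then μX x else 0 := Finset.sum_comm
      _ = ∑ x, μX x := Finset.sum_congr rfl fun x _ => by simp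
      _ = 1 := hμX.2
  -- total weight is 1
  have hsumw4 : (∑ x, ∑ y, ∑ x', ∑ y', μ' x y * μ' x' y') = 1 := by
    have h := sumPart2 (fun _ _ _ _ => (1 : ℝ))
    simp only [one_mul] at h
    rw [h]
    simp_rw [← Finset.mul_sum]
    rw [sumμm]
    simp_rw [mul_one]
    exact sumμm
  -- notation for the quantized distances and distance to RHS
  set dXm : Fin m → Fin m → ℝ := fun p p' => dist (PX.rep p) (PX.rep p') with hdXm
  set dYm : Fin m → Fin m → ℝ := fun q q' => dist (PY.rep q) (PY.rep q') with hdYm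
  set G : ℝ := dGW dXm dYm (blockMass μX PX) (blockMass μY PY) with hG
  -- the B-part of Jstar
  set B : X → Y → X → Y → ℝ := fun x y x' y' =>
    dist (PX.rep (PX.part x)) (PX.rep (PX.part x'))
      - dist (PY.rep (PY.part y)) (PY.rep (PY.part y')) with hB
  have hw4 : ∀ x y x' y', 0 ≤ μ' x y * μ' x' y' := fun x y x' y' =>
    mul_nonneg (hμ'0 x y) (hμ'0 x' y')
  have hGWStar : GWStarLoss PX PY μ' = ∑ x, ∑ y, ∑ x', ∑ y',
      ((Jstar PX PY x y x' y' - B x y x' y') + B x y x' y') ^ 2 * (μ' x y * μ' x' y') := by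
    rw [GWStarLoss]
    exact Finset.sum_congr rfl fun x _ => Finset.sum_congr rfl fun y _ =>
      Finset.sum_congr rfl fun x' _ => Finset.sum_congr rfl fun y' _ => by ring
  have step1 := minkowski4 (fun x y x' y' => Jstar PX PY x y x' y' - B x y x' y')
    B (fun x y x' y' => μ' x y * μ' x' y') hw4
  -- bound the first term by 2ε
  have hA : Real.sqrt (∑ x, ∑ y, ∑ x', ∑ y',
      (Jstar PX PY x y x' y' - B x y x' y') ^ 2 * (μ' x y * μ' x' y')) ≤ 2 * ε := by
    have hle : (∑ x, ∑ y, ∑ x', ∑ y',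
        (Jstar PX PY x y x' y' - B x y x' y') ^ 2 * (μ' x y * μ' x' y')) ≤ (2 * ε) ^ 2 := by
      calc (∑ x, ∑ y, ∑ x', ∑ y',
            (Jstar PX PY x y x' y' - B x y x' y') ^ 2 * (μ' x y * μ' x' y'))
          ≤ ∑ x, ∑ y, ∑ x', ∑ y', (2 * ε) ^ 2 * (μ' x y * μ' x' y') := by
            refine Finset.sum_le_sum fun x _ => Finset.sum_le_sum fun y _ =>
              Finset.sum_le_sum fun x' _ => Finset.sum_le_sum fun y' _ => ?_
            refine mul_le_mul_of_nonneg_right ?_ (hw4 x y x' y')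
            have a1 : dist x (PX.rep (PX.part x)) ≤ ε := hdiamX _ _ (PX.part_rep _).symm
            have a2 : dist (PX.rep (PX.part x')) x' ≤ ε := hdiamX _ _ (PX.part_rep _)
            have b1 : dist y (PY.rep (PY.part y)) ≤ ε := hdiamY _ _ (PY.part_rep _).symm
            have b2 : dist (PY.rep (PY.part y')) y' ≤ ε := hdiamY _ _ (PY.part_rep _)
            have a1' : (0:ℝ) ≤ dist x (PX.rep (PX.part x)) := dist_nonneg
            have a2' : (0:ℝ) ≤ dist (PX.rep (PX.part x')) x' := dist_nonneg
            have b1' : (0:ℝ) ≤ dist y (PY.rep (PY.part y)) := dist_nonneg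
            have b2' : (0:ℝ) ≤ dist (PY.rep (PY.part y')) y' := dist_nonneg
            refine sq_le_sq' ?_ ?_
            · simp only [hB, Jstar]; linarith
            · simp only [hB, Jstar]; linarith
        _ = (2 * ε) ^ 2 * ∑ x, ∑ y, ∑ x', ∑ y', μ' x y * μ' x' y' := by
            simp_rw [← Finset.mul_sum]
        _ = (2 * ε) ^ 2 := by rw [hsumw4, mul_one]
    calc Real.sqrt (∑ x, ∑ y, ∑ x', ∑ y',
          (Jstar PX PY x y x' y' - B x y x' y') ^ 2 * (μ' x y * μ' x' y'))
        ≤ Real.sqrt ((2 * ε) ^ 2) := Real.sqrt_le_sqrt hle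
      _ = 2 * ε := Real.sqrt_sq (by positivity)
  -- the second term equals G
  have hBG : Real.sqrt (∑ x, ∑ y, ∑ x', ∑ y',
      B x y x' y' ^ 2 * (μ' x y * μ' x' y')) = G := by
    have hkey : (∑ x, ∑ y, ∑ x', ∑ y', B x y x' y' ^ 2 * (μ' x y * μ' x' y'))
        = GWLoss dXm dYm μm := by
      rw [GWLoss, ← sumPart2 (fun p q p' q' => (dXm p p' - dYm q q') ^ 2)]
      exact Finset.sum_congr rfl fun x _ => Finset.sum_congr rfl fun y _ =>
        Finset.sum_congr rfl fun x' _ => Finset.sum_congr rfl fun y' _ => by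
          simp only [hB, hdXm, hdYm]; ring
    rw [hkey]
    exact hopt
  calc Real.sqrt (GWStarLoss PX PY μ')
      ≤ Real.sqrt (∑ x, ∑ y, ∑ x', ∑ y',
          (Jstar PX PY x y x' y' - B x y x' y') ^ 2 * (μ' x y * μ' x' y')) +
        Real.sqrt (∑ x, ∑ y, ∑ x', ∑ y', B x y x' y' ^ 2 * (μ' x y * μ' x' y')) := by
        rw [hGWStar]; exact step1
    _ ≤ 2 * ε + G := by rw [hBG]; exact add_le_add_left hA G
end

section
/- Let (X, P_X) and (Y, P_Y) be finite metric measure spaces with m-pointed partitions whose partition blocks all have metric diameter at most ε > 0. Define δ((X,P_X),(Y,P_Y)) = GW(μ)^{1/2}, where μ = Σ_{p,q} μ_m(xᵖ,y^q) μ̄_{xᵖ,y^q} is the coupling produced by the quantized Gromov–Wasserstein algorithm: μ_m is a minimizer of the Gromov–Wasserstein loss over C(μ_{P_X}, μ_{P_Y}) (so GW(μ_m)^{1/2} = d_GW(Xᵐ, Yᵐ)), and each μ_{xᵖ,y^q} ∈ C(μ_{Uᵖ}, μ_{V^q}) is a minimizer of the local linear matching objective Σ_{x∈Uᵖ, y∈V^q}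 (d_X(x,xᵖ) − d_Y(y,y^q))² μ_{xᵖ,y^q}(x,y). Then |d_GW(X, Y) − δ((X,P_X),(Y,P_Y))| ≤ 2(q(P_X) + q(P_Y)) + 8ε. -/
open Finset

/-! ### Auxiliary lemmas for the main theorem -/

section MinkAux
variable {ι : Type*} [Fintype ι]

private lemma mink_plain (f g : ι → ℝ) :
    Real.sqrt (∑ i, (f i + g i)^2) ≤ Real.sqrt (∑ i, f i^2) + Real.sqrt (∑ i, g i^2) := by
  set A := Real.sqrt (∑ i, f i^2) with hA
  set B := Real.sqrt (∑ i, g i^2) with hB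
  have hA0 : 0 ≤ A := Real.sqrt_nonneg _
  have hB0 : 0 ≤ B := Real.sqrt_nonneg _
  have hAs : A^2 = ∑ i, f i^2 := Real.sq_sqrt (by positivity)
  have hBs : B^2 = ∑ i, g i^2 := Real.sq_sqrt (by positivity)
  have cs : ∑ i, f i * g i ≤ A * B := Real.sum_mul_le_sqrt_mul_sqrt _ f g
  have key : ∑ i, (f i + g i)^2 ≤ (A + B)^2 := by
    have : ∑ i, (f i + g i)^2 = ∑ i, f i ^2 + 2 * ∑ i, f i * g i + ∑ i, g i^2 := by
      rw [Finset.mul_sum, ← Finset.sum_add_distrib, ← Finset.sum_add_distrib]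
      exact Finset.sum_congr rfl fun i _ => by ring
    rw [this, ← hAs, ← hBs]; nlinarith
  calc Real.sqrt (∑ i, (f i + g i)^2) ≤ Real.sqrt ((A+B)^2) := Real.sqrt_le_sqrt key
    _ = A + B := Real.sqrt_sq (by positivity)

private lemma mink_w (w f g : ι → ℝ) (hw : ∀ i, 0 ≤ w i) :
    Real.sqrt (∑ i, w i * (f i + g i)^2) ≤
      Real.sqrt (∑ i, w i * f i^2) + Real.sqrt (∑ i, w i * g i^2) := by
  have e : ∀ h : ι → ℝ, ∀ i, w i * h i ^2 = (Real.sqrt (w i) * h i)^2 := by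
    intro h i; rw [mul_pow, Real.sq_sqrt (hw i)]
  have e1 : (∑ i, w i * (f i + g i)^2) =
      ∑ i, (Real.sqrt (w i) * f i + Real.sqrt (w i) * g i)^2 := by
    refine Finset.sum_congr rfl fun i _ => ?_
    rw [← mul_add, ← e (fun i => f i + g i) i]
  rw [e1, Finset.sum_congr rfl fun i _ => e f i, Finset.sum_congr rfl fun i _ => e g i]
  exact mink_plain _ _

private lemma mink_key (w h k b : ι → ℝ) (hw : ∀ i, 0 ≤ w i) (hb : ∀ i, |h i - k i| ≤ b i) :
    Real.sqrt (∑ i, w i * h i^2) ≤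
      Real.sqrt (∑ i, w i * k i^2) + Real.sqrt (∑ i, w i * b i^2) := by
  have e1 : (∑ i, w i * h i^2) = ∑ i, w i * ((k i) + (h i - k i))^2 :=
    Finset.sum_congr rfl fun i _ => by ring_nf
  calc Real.sqrt (∑ i, w i * h i^2)
      ≤ Real.sqrt (∑ i, w i * k i^2) + Real.sqrt (∑ i, w i * (h i - k i)^2) := by
        rw [e1]; exact mink_w w k (fun i => h i - k i) hw
    _ ≤ Real.sqrt (∑ i, w i * k i^2) + Real.sqrt (∑ i, w i * b i^2) := by
        refine add_le_add le_rfl (Real.sqrt_le_sqrt (Finset.sum_le_sum fun i _ => ?_))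
        refine mul_le_mul_of_nonneg_left ?_ (hw i)
        exact sq_le_sq' (by linarith [(abs_le.mp (hb i)).1]) (abs_le.mp (hb i)).2

end MinkAux

section SwapAux
variable {α β γ δ : Type*} [Fintype α] [Fintype β] [Fintype γ] [Fintype δ]

private lemma swap3 (f : α → β → γ → ℝ) :
    ∑ a, ∑ b, ∑ c, f a b c = ∑ b, ∑ c, ∑ a, f a b c := by
  rw [Finset.sum_comm]
  exact Finset.sum_congr rfl fun b _ => Finset.sum_comm

private lemma swap4 (f : α → β → γ → δ → ℝ) :
    ∑ a, ∑ b, ∑ c, ∑ d, f a b c d = ∑ c, ∑ d, ∑ a, ∑ b, f a b c d := by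
  calc ∑ a, ∑ b, ∑ c, ∑ d, f a b c d
      = ∑ a, ∑ c, ∑ b, ∑ d, f a b c d :=
        Finset.sum_congr rfl fun a _ => Finset.sum_comm
    _ = ∑ c, ∑ a, ∑ b, ∑ d, f a b c d := Finset.sum_comm
    _ = ∑ c, ∑ a, ∑ d, ∑ b, f a b c d :=
        Finset.sum_congr rfl fun c _ => Finset.sum_congr rfl fun a _ => Finset.sum_comm
    _ = ∑ c, ∑ d, ∑ a, ∑ b, f a b c d :=
        Finset.sum_congr rfl fun c _ => Finset.sum_comm

end SwapAux

private lemma dist_est {Z : Type*} [MetricSpace Z] (a b a' b' : Z) :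
    |dist a a' - dist b b'| ≤ dist a b + dist a' b' := by
  rw [abs_sub_le_iff]
  constructor
  · have h := dist_triangle4 a b b' a'
    have h2 : dist b' a' = dist a' b' := dist_comm _ _
    linarith
  · have h := dist_triangle4 b a a' b'
    have h2 : dist b a = dist a b := dist_comm _ _
    linarith

section BlockAux
variable {X : Type*} [Fintype X] {m : ℕ} (μX : X → ℝ) (P : PointedPartition X m)

private lemma le_blockMass (hX : ∀ x, 0 ≤ μX x) {x : X} {p : Fin m} (hp : P.part x = p) :
    μX x ≤ blockMass μX P p := by
  have := Finset.single_le_sum (f := fun x => if P.part x = p then μX x else 0)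
    (fun x _ => by by_cases h : P.part x = p <;> simp [h, hX x]) (Finset.mem_univ x)
  simp only [hp, if_true] at this
  exact this

private lemma mass_mul_blockMeasure (hX : ∀ x, 0 ≤ μX x) (p : Fin m) (x : X) :
    blockMass μX P p * blockMeasure μX P p x = if P.part x = p then μX x else 0 := by
  unfold blockMeasure
  by_cases hp : P.part x = p
  · simp only [hp, if_true]
    by_cases hm : blockMass μX P p = 0
    · have : μX x = 0 := le_antisymm (hm ▸ le_blockMass μX P hX hp) (hX x)
      simp [hm, this]
    · field_simp
  · simp [hp]

private lemma sum_blockMeasure (hX : ∀ x, 0 ≤ μX x) {p : Fin m}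
    (hm : blockMass μX P p ≠ 0) : ∑ x, blockMeasure μX P p x = 1 := by
  have e : ∑ x, blockMeasure μX P p x =
      (∑ x, if P.part x = p then μX x else 0) / blockMass μX P p := by
    rw [Finset.sum_div]
    refine Finset.sum_congr rfl fun x _ => ?_
    unfold blockMeasure; split <;> simp
  rw [e]
  exact div_self hm

private lemma qEcc_sq' (dX : X → X → ℝ) (hX : ∀ x, 0 ≤ μX x) :
    (∑ p, blockMass μX P p * ∑ x, dX (P.rep p) x ^ 2 * blockMeasure μX P p x) =
      ∑ x, dX (P.rep (P.part x)) x ^ 2 * μX x := by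
  have step : ∀ p : Fin m, blockMass μX P p * ∑ x, dX (P.rep p) x ^ 2 * blockMeasure μX P p x
      = ∑ x, if P.part x = p then dX (P.rep p) x ^ 2 * μX x else 0 := by
    intro p
    rw [Finset.mul_sum]
    refine Finset.sum_congr rfl fun x _ => ?_
    have e : blockMass μX P p * (dX (P.rep p) x ^ 2 * blockMeasure μX P p x)
        = dX (P.rep p) x ^ 2 * (blockMass μX P p * blockMeasure μX P p x) := by ring
    rw [e, mass_mul_blockMeasure μX P hX]
    split <;> simp
  rw [Finset.sum_congr rfl fun p _ => step p, Finset.sum_comm]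
  refine Finset.sum_congr rfl fun x _ => ?_
  rw [Finset.sum_ite_eq Finset.univ (P.part x) (fun p => dX (P.rep p) x ^ 2 * μX x)]
  simp

end BlockAux
section PushAux
variable {X Y : Type*} [Fintype X] [Fintype Y] {m : ℕ}
  (μX : X → ℝ) (μY : Y → ℝ) (PX : PointedPartition X m) (PY : PointedPartition Y m)

private lemma nu_support_left {p q : Fin m} {ν : X → Y → ℝ}
    (hν : IsCoupling (blockMeasure μX PX p) (blockMeasure μY PY q) ν)
    {x : X} (hx : PX.part x ≠ p) (y : Y) : ν x y = 0 := by
  have h1 : ν x y ≤ ∑ y', ν x y' :=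
    Finset.single_le_sum (f := fun y' => ν x y') (fun y' _ => hν.1 x y') (Finset.mem_univ y)
  have h2 : (∑ y', ν x y') = 0 := by
    rw [hν.2.1 x]; unfold blockMeasure; simp [hx]
  exact le_antisymm (h2 ▸ h1) (hν.1 x y)

private lemma nu_support_right {p q : Fin m} {ν : X → Y → ℝ}
    (hν : IsCoupling (blockMeasure μX PX p) (blockMeasure μY PY q) ν)
    (x : X) {y : Y} (hy : PY.part y ≠ q) : ν x y = 0 := by
  have h1 : ν x y ≤ ∑ x', ν x' y :=
    Finset.single_le_sum (f := fun x' => ν x' y) (fun x' _ => hν.1 x' y) (Finset.mem_univ x)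
  have h2 : (∑ x', ν x' y) = 0 := by
    rw [hν.2.2 y]; unfold blockMeasure; simp [hy]
  exact le_antisymm (h2 ▸ h1) (hν.1 x y)

variable (hX : ∀ x, 0 ≤ μX x) (hY : ∀ y, 0 ≤ μY y)
  (μm : Fin m → Fin m → ℝ) (ν : Fin m → Fin m → X → Y → ℝ)
  (hμm : IsCoupling (blockMass μX PX) (blockMass μY PY) μm)
  (hν : ∀ p q, IsCoupling (blockMeasure μX PX p) (blockMeasure μY PY q) (ν p q))

include hμm in
private lemma mass_pos_of_ne {p q : Fin m} (h : μm p q ≠ 0) :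
    blockMass μX PX p ≠ 0 ∧ blockMass μY PY q ≠ 0 := by
  constructor
  · have h1 : μm p q ≤ ∑ q', μm p q' :=
      Finset.single_le_sum (f := fun q' => μm p q') (fun q' _ => hμm.1 p q') (Finset.mem_univ q)
    rw [hμm.2.1 p] at h1
    intro h0; rw [h0] at h1
    exact h (le_antisymm h1 (hμm.1 p q))
  · have h1 : μm p q ≤ ∑ p', μm p' q :=
      Finset.single_le_sum (f := fun p' => μm p' q) (fun p' _ => hμm.1 p' q) (Finset.mem_univ p)
    rw [hμm.2.2 q] at h1
    intro h0; rw [h0] at h1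
    exact h (le_antisymm h1 (hμm.1 p q))

include hX hμm hν in
private lemma push_pair (F : Fin m → Fin m → ℝ) :
    ∑ x, ∑ y, F (PX.part x) (PY.part y) * (∑ p, ∑ q, μm p q * ν p q x y) =
      ∑ p, ∑ q, F p q * μm p q := by
  have e1 : ∀ x y, F (PX.part x) (PY.part y) * (∑ p, ∑ q, μm p q * ν p q x y) =
      ∑ p, ∑ q, F (PX.part x) (PY.part y) * (μm p q * ν p q x y) := by
    intro x y; rw [Finset.mul_sum]
    exact Finset.sum_congr rfl fun p _ => by rw [Finset.mul_sum]
  calc ∑ x, ∑ y, F (PX.part x) (PY.part y) * (∑ p, ∑ q, μm p q * ν p q x y)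
      = ∑ x, ∑ y, ∑ p, ∑ q, F (PX.part x) (PY.part y) * (μm p q * ν p q x y) :=
        Finset.sum_congr rfl fun x _ => Finset.sum_congr rfl fun y _ => e1 x y
    _ = ∑ p, ∑ q, ∑ x, ∑ y, F (PX.part x) (PY.part y) * (μm p q * ν p q x y) :=
        swap4 _
    _ = ∑ p, ∑ q, F p q * μm p q := by
        refine Finset.sum_congr rfl fun p _ => Finset.sum_congr rfl fun q _ => ?_
        by_cases hm : μm p q = 0
        · simp [hm]
        · obtain ⟨hp, hq⟩ := mass_pos_of_ne μX μY PX PY μm hμm hm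
          have e2 : ∀ x y, F (PX.part x) (PY.part y) * (μm p q * ν p q x y) =
              F p q * (μm p q * ν p q x y) := by
            intro x y
            by_cases hn : ν p q x y = 0
            · simp [hn]
            · have hxp : PX.part x = p := by
                by_contra hc; exact hn (nu_support_left μX μY PX PY (hν p q) hc y)
              have hyq : PY.part y = q := by
                by_contra hc; exact hn (nu_support_right μX μY PX PY (hν p q) x hc)
              rw [hxp, hyq]
          calc ∑ x, ∑ y, F (PX.part x) (PY.part y) * (μm p q * ν p q x y)
              = ∑ x, ∑ y, F p q * (μm p q * ν p q x y) :=
                Finset.sum_congr rfl fun x _ => Finset.sum_congr rfl fun y _ => e2 x y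
            _ = F p q * μm p q * ∑ x, ∑ y, ν p q x y := by
                rw [Finset.mul_sum]
                refine Finset.sum_congr rfl fun x _ => ?_
                rw [Finset.mul_sum]
                exact Finset.sum_congr rfl fun y _ => by ring
            _ = F p q * μm p q := by
                have e3 : ∑ x, ∑ y, ν p q x y = 1 := by
                  rw [Finset.sum_congr rfl fun x _ => (hν p q).2.1 x]
                  exact sum_blockMeasure μX PX hX hp
                rw [e3, mul_one]

include hX hY hμm hν in
private lemma quant_coupling :
    IsCoupling μX μY (fun x y => ∑ p, ∑ q, μm p q * ν p q x y) := by
  refine ⟨fun x y => Finset.sum_nonneg fun p _ => Finset.sum_nonneg fun q _ =>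
    mul_nonneg (hμm.1 p q) ((hν p q).1 x y), fun x => ?_, fun y => ?_⟩
  · calc ∑ y, ∑ p, ∑ q, μm p q * ν p q x y
        = ∑ p, ∑ q, ∑ y, μm p q * ν p q x y := swap3 _
      _ = ∑ p, ∑ q, μm p q * blockMeasure μX PX p x := by
          refine Finset.sum_congr rfl fun p _ => Finset.sum_congr rfl fun q _ => ?_
          rw [← Finset.mul_sum, (hν p q).2.1 x]
      _ = ∑ p, blockMass μX PX p * blockMeasure μX PX p x := by
          refine Finset.sum_congr rfl fun p _ => ?_
          rw [← Finset.sum_mul, hμm.2.1 p]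
      _ = μX x := by
          rw [Finset.sum_congr rfl fun p _ => mass_mul_blockMeasure μX PX hX p x]
          rw [Finset.sum_ite_eq Finset.univ (PX.part x) (fun _ => μX x)]
          simp
  · calc ∑ x, ∑ p, ∑ q, μm p q * ν p q x y
        = ∑ p, ∑ q, ∑ x, μm p q * ν p q x y := swap3 _
      _ = ∑ p, ∑ q, μm p q * blockMeasure μY PY q y := by
          refine Finset.sum_congr rfl fun p _ => Finset.sum_congr rfl fun q _ => ?_
          rw [← Finset.mul_sum, (hν p q).2.2 y]
      _ = ∑ q, blockMass μY PY q * blockMeasure μY PY q y := by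
          rw [Finset.sum_comm]
          refine Finset.sum_congr rfl fun q _ => ?_
          rw [← Finset.sum_mul, hμm.2.2 q]
      _ = μY y := by
          rw [Finset.sum_congr rfl fun q _ => mass_mul_blockMeasure μY PY hY q y]
          rw [Finset.sum_ite_eq Finset.univ (PY.part y) (fun _ => μY y)]
          simp

end PushAux

section PushG
variable {X Y : Type*} [Fintype X] [Fintype Y] {m : ℕ}
  (μX : X → ℝ) (μY : Y → ℝ) (PX : PointedPartition X m) (PY : PointedPartition Y m)
  (γ : X → Y → ℝ)

/-- pushforward of a coupling under the partition maps -/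
private noncomputable def pushCoup (p q : Fin m) : ℝ :=
  ∑ x, ∑ y, if PX.part x = p ∧ PY.part y = q then γ x y else 0

private lemma pushCoup_coupling (hγ : IsCoupling μX μY γ) :
    IsCoupling (blockMass μX PX) (blockMass μY PY) (pushCoup PX PY γ) := by
  refine ⟨fun p q => Finset.sum_nonneg fun x _ => Finset.sum_nonneg fun y _ => ?_,
    fun p => ?_, fun q => ?_⟩
  · split
    · exact hγ.1 x y
    · exact le_rfl
  · calc ∑ q, pushCoup PX PY γ p q
        = ∑ x, ∑ y, ∑ q, if PX.part x = p ∧ PY.part y = q then γ x y else 0 := swap3 _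
      _ = ∑ x, ∑ y, if PX.part x = p then γ x y else 0 := by
          refine Finset.sum_congr rfl fun x _ => Finset.sum_congr rfl fun y _ => ?_
          by_cases hx : PX.part x = p <;> simp [hx, Finset.sum_ite_eq]
      _ = blockMass μX PX p := by
          unfold blockMass
          refine Finset.sum_congr rfl fun x _ => ?_
          by_cases hx : PX.part x = p <;> simp [hx, hγ.2.1 x]
  · calc ∑ p, pushCoup PX PY γ p q
        = ∑ x, ∑ y, ∑ p, if PX.part x = p ∧ PY.part y = q then γ x y else 0 := swap3 _
      _ = ∑ y, ∑ x, if PY.part y = q then γ x y else 0 := by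
          rw [Finset.sum_comm]
          refine Finset.sum_congr rfl fun y _ => Finset.sum_congr rfl fun x _ => ?_
          by_cases hy : PY.part y = q <;> simp [hy, Finset.sum_ite_eq, and_comm]
      _ = blockMass μY PY q := by
          unfold blockMass
          refine Finset.sum_congr rfl fun y _ => ?_
          by_cases hy : PY.part y = q <;> simp [hy, hγ.2.2 y]

private lemma push_pair_g (F : Fin m → Fin m → ℝ) :
    ∑ p, ∑ q, F p q * pushCoup PX PY γ p q =
      ∑ x, ∑ y, F (PX.part x) (PY.part y) * γ x y := by
  unfold pushCoup
  calc ∑ p, ∑ q, F p q * (∑ x, ∑ y, if PX.part x = p ∧ PY.part y = q then γ x y else 0)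
      = ∑ p, ∑ q, ∑ x, ∑ y,
          (if PX.part x = p ∧ PY.part y = q then F p q * γ x y else 0) := by
        refine Finset.sum_congr rfl fun p _ => Finset.sum_congr rfl fun q _ => ?_
        rw [Finset.mul_sum]
        refine Finset.sum_congr rfl fun x _ => ?_
        rw [Finset.mul_sum]
        refine Finset.sum_congr rfl fun y _ => ?_
        split <;> simp
    _ = ∑ x, ∑ y, ∑ p, ∑ q,
          (if PX.part x = p ∧ PY.part y = q then F p q * γ x y else 0) := swap4 _
    _ = ∑ x, ∑ y, F (PX.part x) (PY.part y) * γ x y := by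
        refine Finset.sum_congr rfl fun x _ => Finset.sum_congr rfl fun y _ => ?_
        have step : ∀ p, (∑ q, if PX.part x = p ∧ PY.part y = q then F p q * γ x y else 0)
            = if PX.part x = p then F p (PY.part y) * γ x y else 0 := by
          intro p
          by_cases hp : PX.part x = p <;> simp [hp, Finset.sum_ite_eq]
        rw [Finset.sum_congr rfl fun p _ => step p,
          Finset.sum_ite_eq Finset.univ (PX.part x) (fun p => F p (PY.part y) * γ x y)]
        simp

end PushG
section QuadAux
variable {X Y : Type*} [Fintype X] [Fintype Y]

private lemma quad_eq (g : X → Y → X → Y → ℝ) :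
    ∑ i : X × Y × X × Y, g i.1 i.2.1 i.2.2.1 i.2.2.2 =
      ∑ x, ∑ y, ∑ x', ∑ y', g x y x' y' := by
  simp only [Fintype.sum_prod_type]

variable (μX : X → ℝ) (μY : Y → ℝ) (γ : X → Y → ℝ)

private lemma coup_total (hγ : IsCoupling μX μY γ) (h1 : (∑ x, μX x) = 1) :
    ∑ x, ∑ y, γ x y = 1 := by
  rw [Finset.sum_congr rfl fun x _ => hγ.2.1 x, h1]

private lemma quad_marg (hγ : IsCoupling μX μY γ) (h1 : (∑ x, μX x) = 1) (F : X → Y → ℝ) :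
    ∑ x, ∑ y, ∑ x', ∑ y', F x y * (γ x y * γ x' y') = ∑ x, ∑ y, F x y * γ x y := by
  refine Finset.sum_congr rfl fun x _ => Finset.sum_congr rfl fun y _ => ?_
  calc ∑ x', ∑ y', F x y * (γ x y * γ x' y')
      = (F x y * γ x y) * ∑ x', ∑ y', γ x' y' := by
        rw [Finset.mul_sum]
        refine Finset.sum_congr rfl fun x' _ => ?_
        rw [Finset.mul_sum]
        exact Finset.sum_congr rfl fun y' _ => by ring
    _ = F x y * γ x y := by rw [coup_total μX μY γ hγ h1, mul_one]

private lemma quad_marg' (hγ : IsCoupling μX μY γ) (h1 : (∑ x, μX x) = 1) (F : X → Y → ℝ) :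
    ∑ x, ∑ y, ∑ x', ∑ y', F x' y' * (γ x y * γ x' y') = ∑ x, ∑ y, F x y * γ x y := by
  rw [swap4]
  calc ∑ x', ∑ y', ∑ x, ∑ y, F x' y' * (γ x y * γ x' y')
      = ∑ x', ∑ y', ∑ x, ∑ y, F x' y' * (γ x' y' * γ x y) := by
        refine Finset.sum_congr rfl fun _ _ => Finset.sum_congr rfl fun _ _ =>
          Finset.sum_congr rfl fun _ _ => Finset.sum_congr rfl fun _ _ => by ring
    _ = ∑ x', ∑ y', F x' y' * γ x' y' := by
        refine Finset.sum_congr rfl fun x' _ => Finset.sum_congr rfl fun y' _ => ?_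
        calc ∑ x, ∑ y, F x' y' * (γ x' y' * γ x y)
            = (F x' y' * γ x' y') * ∑ x, ∑ y, γ x y := by
              rw [Finset.mul_sum]
              refine Finset.sum_congr rfl fun x _ => ?_
              rw [Finset.mul_sum]
              exact Finset.sum_congr rfl fun y _ => by ring
          _ = F x' y' * γ x' y' := by rw [coup_total μX μY γ hγ h1, mul_one]

private lemma quad_total (hγ : IsCoupling μX μY γ) (h1 : (∑ x, μX x) = 1) :
    ∑ x, ∑ y, ∑ x', ∑ y', γ x y * γ x' y' = 1 := by
  have e := quad_marg μX μY γ hγ h1 (fun _ _ => 1)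
  simp only [one_mul] at e
  rw [e, coup_total μX μY γ hγ h1]

private lemma pair_margX (hγ : IsCoupling μX μY γ) (f : X → ℝ) :
    ∑ x, ∑ y, f x * γ x y = ∑ x, f x * μX x := by
  refine Finset.sum_congr rfl fun x _ => ?_
  rw [← Finset.mul_sum, hγ.2.1 x]

private lemma pair_margY (hγ : IsCoupling μX μY γ) (g : Y → ℝ) :
    ∑ x, ∑ y, g y * γ x y = ∑ y, g y * μY y := by
  rw [Finset.sum_comm]
  refine Finset.sum_congr rfl fun y _ => ?_
  rw [← Finset.mul_sum, hγ.2.2 y]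

end QuadAux

private lemma pair_to_quad {X Y : Type*} [Fintype X] [Fintype Y] {m : ℕ}
    (pX : X → Fin m) (pY : Y → Fin m) (μ : X → Y → ℝ) (μm : Fin m → Fin m → ℝ)
    (T : ∀ F : Fin m → Fin m → ℝ,
      ∑ x, ∑ y, F (pX x) (pY y) * μ x y = ∑ p, ∑ q, F p q * μm p q)
    (G : Fin m → Fin m → Fin m → Fin m → ℝ) :
    ∑ x, ∑ y, ∑ x', ∑ y', G (pX x) (pY y) (pX x') (pY y') * (μ x y * μ x' y') =
      ∑ p, ∑ q, ∑ p', ∑ q', G p q p' q' * (μm p q * μm p' q') := by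
  calc ∑ x, ∑ y, ∑ x', ∑ y', G (pX x) (pY y) (pX x') (pY y') * (μ x y * μ x' y')
      = ∑ x, ∑ y, (∑ x', ∑ y', G (pX x) (pY y) (pX x') (pY y') * μ x' y') * μ x y := by
        refine Finset.sum_congr rfl fun x _ => Finset.sum_congr rfl fun y _ => ?_
        rw [Finset.sum_mul]
        refine Finset.sum_congr rfl fun x' _ => ?_
        rw [Finset.sum_mul]
        exact Finset.sum_congr rfl fun y' _ => by ring
    _ = ∑ x, ∑ y, (∑ p', ∑ q', G (pX x) (pY y) p' q' * μm p' q') * μ x y := by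
        refine Finset.sum_congr rfl fun x _ => Finset.sum_congr rfl fun y _ => ?_
        rw [T (fun p' q' => G (pX x) (pY y) p' q')]
    _ = ∑ x, ∑ y, ∑ p', ∑ q', (G (pX x) (pY y) p' q' * μm p' q') * μ x y := by
        refine Finset.sum_congr rfl fun x _ => Finset.sum_congr rfl fun y _ => ?_
        rw [Finset.sum_mul]
        refine Finset.sum_congr rfl fun p' _ => ?_
        rw [Finset.sum_mul]
    _ = ∑ p', ∑ q', ∑ x, ∑ y, (G (pX x) (pY y) p' q' * μm p' q') * μ x y := swap4 _
    _ = ∑ p', ∑ q', ∑ p, ∑ q, (G p q p' q' * μm p' q') * μm p q := by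
        refine Finset.sum_congr rfl fun p' _ => Finset.sum_congr rfl fun q' _ => ?_
        exact T (fun p q => G p q p' q' * μm p' q')
    _ = ∑ p, ∑ q, ∑ p', ∑ q', G p q p' q' * (μm p q * μm p' q') := by
        rw [swap4]
        refine Finset.sum_congr rfl fun p _ => Finset.sum_congr rfl fun q _ =>
          Finset.sum_congr rfl fun p' _ => Finset.sum_congr rfl fun q' _ => by ring
private lemma step2_lemma {X Y : Type*} [Fintype X] [Fintype Y] [MetricSpace X] [MetricSpace Y]
    {m : ℕ} (μX : X → ℝ) (μY : Y → ℝ) (hXsum : (∑ x, μX x) = 1)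
    (PX : PointedPartition X m) (PY : PointedPartition Y m)
    (ε : ℝ) (hε : 0 ≤ ε)
    (hdX : ∀ x : X, dist x (PX.rep (PX.part x)) ≤ ε)
    (hdY : ∀ y : Y, dist y (PY.rep (PY.part y)) ≤ ε)
    (μ : X → Y → ℝ) (hcoup : IsCoupling μX μY μ)
    (μm : Fin m → Fin m → ℝ)
    (T : ∀ F : Fin m → Fin m → ℝ,
      ∑ x, ∑ y, F (PX.part x) (PY.part y) * μ x y = ∑ p, ∑ q, F p q * μm p q) :
    Real.sqrt (GWLoss (fun x x' => dist x x') (fun y y' => dist y y') μ) ≤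
      Real.sqrt (GWLoss (fun p p' => dist (PX.rep p) (PX.rep p'))
        (fun q q' => dist (PY.rep q) (PY.rep q')) μm) + 4 * ε := by
  have hw : ∀ i : X × Y × X × Y, 0 ≤ μ i.1 i.2.1 * μ i.2.2.1 i.2.2.2 :=
    fun i => mul_nonneg (hcoup.1 _ _) (hcoup.1 _ _)
  have hb : ∀ i : X × Y × X × Y,
      |(dist i.1 i.2.2.1 - dist i.2.1 i.2.2.2) -
        (dist (PX.rep (PX.part i.1)) (PX.rep (PX.part i.2.2.1)) -
          dist (PY.rep (PY.part i.2.1)) (PY.rep (PY.part i.2.2.2)))| ≤ 4 * ε := by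
    rintro ⟨x, y, x', y'⟩
    dsimp only
    have a1 := abs_le.mp (dist_est x (PX.rep (PX.part x)) x' (PX.rep (PX.part x')))
    have a2 := abs_le.mp (dist_est y (PY.rep (PY.part y)) y' (PY.rep (PY.part y')))
    have b1 := hdX x; have b2 := hdX x'; have b3 := hdY y; have b4 := hdY y'
    rw [abs_le]
    exact ⟨by linarith [a1.1, a1.2, a2.1, a2.2], by linarith [a1.1, a1.2, a2.1, a2.2]⟩
  have key := mink_key (ι := X × Y × X × Y)
    (fun i => μ i.1 i.2.1 * μ i.2.2.1 i.2.2.2)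
    (fun i => dist i.1 i.2.2.1 - dist i.2.1 i.2.2.2)
    (fun i => dist (PX.rep (PX.part i.1)) (PX.rep (PX.part i.2.2.1)) -
      dist (PY.rep (PY.part i.2.1)) (PY.rep (PY.part i.2.2.2)))
    (fun _ => 4 * ε) hw hb
  have e1 : (∑ i : X × Y × X × Y, μ i.1 i.2.1 * μ i.2.2.1 i.2.2.2 *
      (dist i.1 i.2.2.1 - dist i.2.1 i.2.2.2) ^ 2) =
      GWLoss (fun x x' => dist x x') (fun y y' => dist y y') μ := by
    calc (∑ i : X × Y × X × Y, μ i.1 i.2.1 * μ i.2.2.1 i.2.2.2 *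
        (dist i.1 i.2.2.1 - dist i.2.1 i.2.2.2) ^ 2)
        = ∑ x, ∑ y, ∑ x', ∑ y', μ x y * μ x' y' * (dist x x' - dist y y') ^ 2 :=
          quad_eq (fun x y x' y' => μ x y * μ x' y' * (dist x x' - dist y y') ^ 2)
      _ = GWLoss (fun x x' => dist x x') (fun y y' => dist y y') μ := by
          unfold GWLoss
          exact Finset.sum_congr rfl fun x _ => Finset.sum_congr rfl fun y _ =>
            Finset.sum_congr rfl fun x' _ => Finset.sum_congr rfl fun y' _ => by ring
  have e2 : (∑ i : X × Y × X × Y, μ i.1 i.2.1 * μ i.2.2.1 i.2.2.2 *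
      (dist (PX.rep (PX.part i.1)) (PX.rep (PX.part i.2.2.1)) -
        dist (PY.rep (PY.part i.2.1)) (PY.rep (PY.part i.2.2.2))) ^ 2) =
      GWLoss (fun p p' => dist (PX.rep p) (PX.rep p'))
        (fun q q' => dist (PY.rep q) (PY.rep q')) μm := by
    calc (∑ i : X × Y × X × Y, μ i.1 i.2.1 * μ i.2.2.1 i.2.2.2 *
        (dist (PX.rep (PX.part i.1)) (PX.rep (PX.part i.2.2.1)) -
          dist (PY.rep (PY.part i.2.1)) (PY.rep (PY.part i.2.2.2))) ^ 2)
        = ∑ x, ∑ y, ∑ x', ∑ y', μ x y * μ x' y' *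
            (dist (PX.rep (PX.part x)) (PX.rep (PX.part x')) -
              dist (PY.rep (PY.part y)) (PY.rep (PY.part y'))) ^ 2 :=
          quad_eq (fun x y x' y' => μ x y * μ x' y' *
            (dist (PX.rep (PX.part x)) (PX.rep (PX.part x')) -
              dist (PY.rep (PY.part y)) (PY.rep (PY.part y'))) ^ 2)
      _ = ∑ x, ∑ y, ∑ x', ∑ y',
            (dist (PX.rep (PX.part x)) (PX.rep (PX.part x')) -
              dist (PY.rep (PY.part y)) (PY.rep (PY.part y'))) ^ 2 * (μ x y * μ x' y') :=
          Finset.sum_congr rfl fun x _ => Finset.sum_congr rfl fun y _ =>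
            Finset.sum_congr rfl fun x' _ => Finset.sum_congr rfl fun y' _ => by ring
      _ = ∑ p, ∑ q, ∑ p', ∑ q',
            (dist (PX.rep p) (PX.rep p') - dist (PY.rep q) (PY.rep q')) ^ 2 *
              (μm p q * μm p' q') :=
          pair_to_quad PX.part PY.part μ μm T
            (fun p q p' q' => (dist (PX.rep p) (PX.rep p') - dist (PY.rep q) (PY.rep q')) ^ 2)
      _ = GWLoss (fun p p' => dist (PX.rep p) (PX.rep p'))
            (fun q q' => dist (PY.rep q) (PY.rep q')) μm := by
          unfold GWLoss
          exact Finset.sum_congr rfl fun p _ => Finset.sum_congr rfl fun q _ =>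
            Finset.sum_congr rfl fun p' _ => Finset.sum_congr rfl fun q' _ => by ring
  have e3 : (∑ i : X × Y × X × Y, μ i.1 i.2.1 * μ i.2.2.1 i.2.2.2 * (4 * ε) ^ 2) =
      (4 * ε) ^ 2 := by
    have et : (∑ i : X × Y × X × Y, μ i.1 i.2.1 * μ i.2.2.1 i.2.2.2) = 1 := by
      calc (∑ i : X × Y × X × Y, μ i.1 i.2.1 * μ i.2.2.1 i.2.2.2)
          = ∑ x, ∑ y, ∑ x', ∑ y', μ x y * μ x' y' :=
            quad_eq (fun x y x' y' => μ x y * μ x' y')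
        _ = 1 := quad_total μX μY μ hcoup hXsum
    rw [← Finset.sum_mul, et, one_mul]
  calc Real.sqrt (GWLoss (fun x x' => dist x x') (fun y y' => dist y y') μ)
      = Real.sqrt (∑ i : X × Y × X × Y, μ i.1 i.2.1 * μ i.2.2.1 i.2.2.2 *
          (dist i.1 i.2.2.1 - dist i.2.1 i.2.2.2) ^ 2) := by rw [e1]
    _ ≤ Real.sqrt (∑ i : X × Y × X × Y, μ i.1 i.2.1 * μ i.2.2.1 i.2.2.2 *
          (dist (PX.rep (PX.part i.1)) (PX.rep (PX.part i.2.2.1)) -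
            dist (PY.rep (PY.part i.2.1)) (PY.rep (PY.part i.2.2.2))) ^ 2) +
        Real.sqrt (∑ i : X × Y × X × Y, μ i.1 i.2.1 * μ i.2.2.1 i.2.2.2 * (4 * ε) ^ 2) := key
    _ = Real.sqrt (GWLoss (fun p p' => dist (PX.rep p) (PX.rep p'))
          (fun q q' => dist (PY.rep q) (PY.rep q')) μm) + Real.sqrt ((4 * ε) ^ 2) := by
        rw [e2, e3]
    _ = Real.sqrt (GWLoss (fun p p' => dist (PX.rep p) (PX.rep p'))
          (fun q q' => dist (PY.rep q) (PY.rep q')) μm) + 4 * ε := by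
        rw [Real.sqrt_sq (by positivity)]
private lemma step3_lemma {X Y : Type*} [Fintype X] [Fintype Y] [MetricSpace X] [MetricSpace Y]
    {m : ℕ} (μX : X → ℝ) (μY : Y → ℝ) (hX : ∀ x, 0 ≤ μX x) (hXsum : (∑ x, μX x) = 1)
    (PX : PointedPartition X m) (PY : PointedPartition Y m)
    (γ : X → Y → ℝ) (hγ : IsCoupling μX μY γ) :
    Real.sqrt (GWLoss (fun p p' => dist (PX.rep p) (PX.rep p'))
        (fun q q' => dist (PY.rep q) (PY.rep q')) (pushCoup PX PY γ)) ≤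
      Real.sqrt (GWLoss (fun x x' => dist x x') (fun y y' => dist y y') γ) +
        (2 * qEcc (fun x x' => dist x x') μX PX + 2 * qEcc (fun y y' => dist y y') μY PY) := by
  have hw : ∀ i : X × Y × X × Y, 0 ≤ γ i.1 i.2.1 * γ i.2.2.1 i.2.2.2 :=
    fun i => mul_nonneg (hγ.1 _ _) (hγ.1 _ _)
  have hb : ∀ i : X × Y × X × Y,
      |(dist (PX.rep (PX.part i.1)) (PX.rep (PX.part i.2.2.1)) -
          dist (PY.rep (PY.part i.2.1)) (PY.rep (PY.part i.2.2.2))) -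
        (dist i.1 i.2.2.1 - dist i.2.1 i.2.2.2)| ≤
      dist i.1 (PX.rep (PX.part i.1)) + dist i.2.2.1 (PX.rep (PX.part i.2.2.1)) +
        dist i.2.1 (PY.rep (PY.part i.2.1)) + dist i.2.2.2 (PY.rep (PY.part i.2.2.2)) := by
    rintro ⟨x, y, x', y'⟩
    dsimp only
    have a1 := abs_le.mp (dist_est x (PX.rep (PX.part x)) x' (PX.rep (PX.part x')))
    have a2 := abs_le.mp (dist_est y (PY.rep (PY.part y)) y' (PY.rep (PY.part y')))
    rw [abs_le]
    exact ⟨by linarith [a1.1, a1.2, a2.1, a2.2], by linarith [a1.1, a1.2, a2.1, a2.2]⟩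
  have key := mink_key (ι := X × Y × X × Y)
    (fun i => γ i.1 i.2.1 * γ i.2.2.1 i.2.2.2)
    (fun i => dist (PX.rep (PX.part i.1)) (PX.rep (PX.part i.2.2.1)) -
      dist (PY.rep (PY.part i.2.1)) (PY.rep (PY.part i.2.2.2)))
    (fun i => dist i.1 i.2.2.1 - dist i.2.1 i.2.2.2)
    (fun i => dist i.1 (PX.rep (PX.part i.1)) + dist i.2.2.1 (PX.rep (PX.part i.2.2.1)) +
      dist i.2.1 (PY.rep (PY.part i.2.1)) + dist i.2.2.2 (PY.rep (PY.part i.2.2.2)))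
    hw hb
  have s1 := mink_w (ι := X × Y × X × Y)
    (fun i => γ i.1 i.2.1 * γ i.2.2.1 i.2.2.2)
    (fun i => dist i.1 (PX.rep (PX.part i.1)) + dist i.2.2.1 (PX.rep (PX.part i.2.2.1)) +
      dist i.2.1 (PY.rep (PY.part i.2.1)))
    (fun i => dist i.2.2.2 (PY.rep (PY.part i.2.2.2))) hw
  have s2 := mink_w (ι := X × Y × X × Y)
    (fun i => γ i.1 i.2.1 * γ i.2.2.1 i.2.2.2)
    (fun i => dist i.1 (PX.rep (PX.part i.1)) + dist i.2.2.1 (PX.rep (PX.part i.2.2.1)))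
    (fun i => dist i.2.1 (PY.rep (PY.part i.2.1))) hw
  have s3 := mink_w (ι := X × Y × X × Y)
    (fun i => γ i.1 i.2.1 * γ i.2.2.1 i.2.2.2)
    (fun i => dist i.1 (PX.rep (PX.part i.1)))
    (fun i => dist i.2.2.1 (PX.rep (PX.part i.2.2.1))) hw
  -- identify the four eccentricity sums
  have A1 : (∑ i : X × Y × X × Y, γ i.1 i.2.1 * γ i.2.2.1 i.2.2.2 *
      dist i.1 (PX.rep (PX.part i.1)) ^ 2) =
      ∑ x, dist (PX.rep (PX.part x)) x ^ 2 * μX x := by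
    calc (∑ i : X × Y × X × Y, γ i.1 i.2.1 * γ i.2.2.1 i.2.2.2 *
        dist i.1 (PX.rep (PX.part i.1)) ^ 2)
        = ∑ x, ∑ y, ∑ x', ∑ y', γ x y * γ x' y' * dist x (PX.rep (PX.part x)) ^ 2 :=
          quad_eq (fun x y x' y' => γ x y * γ x' y' * dist x (PX.rep (PX.part x)) ^ 2)
      _ = ∑ x, ∑ y, ∑ x', ∑ y', dist x (PX.rep (PX.part x)) ^ 2 * (γ x y * γ x' y') :=
          Finset.sum_congr rfl fun x _ => Finset.sum_congr rfl fun y _ =>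
            Finset.sum_congr rfl fun x' _ => Finset.sum_congr rfl fun y' _ => by ring
      _ = ∑ x, ∑ y, dist x (PX.rep (PX.part x)) ^ 2 * γ x y :=
          quad_marg μX μY γ hγ hXsum (fun x _ => dist x (PX.rep (PX.part x)) ^ 2)
      _ = ∑ x, dist x (PX.rep (PX.part x)) ^ 2 * μX x :=
          pair_margX μX μY γ hγ (fun x => dist x (PX.rep (PX.part x)) ^ 2)
      _ = ∑ x, dist (PX.rep (PX.part x)) x ^ 2 * μX x :=
          Finset.sum_congr rfl fun x _ => by rw [dist_comm]
  have A2 : (∑ i : X × Y × X × Y, γ i.1 i.2.1 * γ i.2.2.1 i.2.2.2 *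
      dist i.2.2.1 (PX.rep (PX.part i.2.2.1)) ^ 2) =
      ∑ x, dist (PX.rep (PX.part x)) x ^ 2 * μX x := by
    calc (∑ i : X × Y × X × Y, γ i.1 i.2.1 * γ i.2.2.1 i.2.2.2 *
        dist i.2.2.1 (PX.rep (PX.part i.2.2.1)) ^ 2)
        = ∑ x, ∑ y, ∑ x', ∑ y', γ x y * γ x' y' * dist x' (PX.rep (PX.part x')) ^ 2 :=
          quad_eq (fun x y x' y' => γ x y * γ x' y' * dist x' (PX.rep (PX.part x')) ^ 2)
      _ = ∑ x, ∑ y, ∑ x', ∑ y', dist x' (PX.rep (PX.part x')) ^ 2 * (γ x y * γ x' y') :=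
          Finset.sum_congr rfl fun x _ => Finset.sum_congr rfl fun y _ =>
            Finset.sum_congr rfl fun x' _ => Finset.sum_congr rfl fun y' _ => by ring
      _ = ∑ x, ∑ y, dist x (PX.rep (PX.part x)) ^ 2 * γ x y :=
          quad_marg' μX μY γ hγ hXsum (fun x _ => dist x (PX.rep (PX.part x)) ^ 2)
      _ = ∑ x, dist x (PX.rep (PX.part x)) ^ 2 * μX x :=
          pair_margX μX μY γ hγ (fun x => dist x (PX.rep (PX.part x)) ^ 2)
      _ = ∑ x, dist (PX.rep (PX.part x)) x ^ 2 * μX x :=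
          Finset.sum_congr rfl fun x _ => by rw [dist_comm]
  have A3 : (∑ i : X × Y × X × Y, γ i.1 i.2.1 * γ i.2.2.1 i.2.2.2 *
      dist i.2.1 (PY.rep (PY.part i.2.1)) ^ 2) =
      ∑ y, dist (PY.rep (PY.part y)) y ^ 2 * μY y := by
    calc (∑ i : X × Y × X × Y, γ i.1 i.2.1 * γ i.2.2.1 i.2.2.2 *
        dist i.2.1 (PY.rep (PY.part i.2.1)) ^ 2)
        = ∑ x, ∑ y, ∑ x', ∑ y', γ x y * γ x' y' * dist y (PY.rep (PY.part y)) ^ 2 :=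
          quad_eq (fun x y x' y' => γ x y * γ x' y' * dist y (PY.rep (PY.part y)) ^ 2)
      _ = ∑ x, ∑ y, ∑ x', ∑ y', dist y (PY.rep (PY.part y)) ^ 2 * (γ x y * γ x' y') :=
          Finset.sum_congr rfl fun x _ => Finset.sum_congr rfl fun y _ =>
            Finset.sum_congr rfl fun x' _ => Finset.sum_congr rfl fun y' _ => by ring
      _ = ∑ x, ∑ y, dist y (PY.rep (PY.part y)) ^ 2 * γ x y :=
          quad_marg μX μY γ hγ hXsum (fun _ y => dist y (PY.rep (PY.part y)) ^ 2)
      _ = ∑ y, dist y (PY.rep (PY.part y)) ^ 2 * μY y :=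
          pair_margY μX μY γ hγ (fun y => dist y (PY.rep (PY.part y)) ^ 2)
      _ = ∑ y, dist (PY.rep (PY.part y)) y ^ 2 * μY y :=
          Finset.sum_congr rfl fun y _ => by rw [dist_comm]
  have A4 : (∑ i : X × Y × X × Y, γ i.1 i.2.1 * γ i.2.2.1 i.2.2.2 *
      dist i.2.2.2 (PY.rep (PY.part i.2.2.2)) ^ 2) =
      ∑ y, dist (PY.rep (PY.part y)) y ^ 2 * μY y := by
    calc (∑ i : X × Y × X × Y, γ i.1 i.2.1 * γ i.2.2.1 i.2.2.2 *
        dist i.2.2.2 (PY.rep (PY.part i.2.2.2)) ^ 2)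
        = ∑ x, ∑ y, ∑ x', ∑ y', γ x y * γ x' y' * dist y' (PY.rep (PY.part y')) ^ 2 :=
          quad_eq (fun x y x' y' => γ x y * γ x' y' * dist y' (PY.rep (PY.part y')) ^ 2)
      _ = ∑ x, ∑ y, ∑ x', ∑ y', dist y' (PY.rep (PY.part y')) ^ 2 * (γ x y * γ x' y') :=
          Finset.sum_congr rfl fun x _ => Finset.sum_congr rfl fun y _ =>
            Finset.sum_congr rfl fun x' _ => Finset.sum_congr rfl fun y' _ => by ring
      _ = ∑ x, ∑ y, dist y (PY.rep (PY.part y)) ^ 2 * γ x y :=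
          quad_marg' μX μY γ hγ hXsum (fun _ y => dist y (PY.rep (PY.part y)) ^ 2)
      _ = ∑ y, dist y (PY.rep (PY.part y)) ^ 2 * μY y :=
          pair_margY μX μY γ hγ (fun y => dist y (PY.rep (PY.part y)) ^ 2)
      _ = ∑ y, dist (PY.rep (PY.part y)) y ^ 2 * μY y :=
          Finset.sum_congr rfl fun y _ => by rw [dist_comm]
  -- the two GW losses
  have A5 : (∑ i : X × Y × X × Y, γ i.1 i.2.1 * γ i.2.2.1 i.2.2.2 *
      (dist (PX.rep (PX.part i.1)) (PX.rep (PX.part i.2.2.1)) -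
        dist (PY.rep (PY.part i.2.1)) (PY.rep (PY.part i.2.2.2))) ^ 2) =
      GWLoss (fun p p' => dist (PX.rep p) (PX.rep p'))
        (fun q q' => dist (PY.rep q) (PY.rep q')) (pushCoup PX PY γ) := by
    calc (∑ i : X × Y × X × Y, γ i.1 i.2.1 * γ i.2.2.1 i.2.2.2 *
        (dist (PX.rep (PX.part i.1)) (PX.rep (PX.part i.2.2.1)) -
          dist (PY.rep (PY.part i.2.1)) (PY.rep (PY.part i.2.2.2))) ^ 2)
        = ∑ x, ∑ y, ∑ x', ∑ y', γ x y * γ x' y' *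
            (dist (PX.rep (PX.part x)) (PX.rep (PX.part x')) -
              dist (PY.rep (PY.part y)) (PY.rep (PY.part y'))) ^ 2 :=
          quad_eq (fun x y x' y' => γ x y * γ x' y' *
            (dist (PX.rep (PX.part x)) (PX.rep (PX.part x')) -
              dist (PY.rep (PY.part y)) (PY.rep (PY.part y'))) ^ 2)
      _ = ∑ x, ∑ y, ∑ x', ∑ y',
            (dist (PX.rep (PX.part x)) (PX.rep (PX.part x')) -
              dist (PY.rep (PY.part y)) (PY.rep (PY.part y'))) ^ 2 * (γ x y * γ x' y') :=
          Finset.sum_congr rfl fun x _ => Finset.sum_congr rfl fun y _ =>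
            Finset.sum_congr rfl fun x' _ => Finset.sum_congr rfl fun y' _ => by ring
      _ = ∑ p, ∑ q, ∑ p', ∑ q',
            (dist (PX.rep p) (PX.rep p') - dist (PY.rep q) (PY.rep q')) ^ 2 *
              (pushCoup PX PY γ p q * pushCoup PX PY γ p' q') :=
          pair_to_quad PX.part PY.part γ (pushCoup PX PY γ)
            (fun F => (push_pair_g PX PY γ F).symm)
            (fun p q p' q' => (dist (PX.rep p) (PX.rep p') - dist (PY.rep q) (PY.rep q')) ^ 2)
      _ = GWLoss (fun p p' => dist (PX.rep p) (PX.rep p'))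
            (fun q q' => dist (PY.rep q) (PY.rep q')) (pushCoup PX PY γ) := by
          unfold GWLoss
          exact Finset.sum_congr rfl fun p _ => Finset.sum_congr rfl fun q _ =>
            Finset.sum_congr rfl fun p' _ => Finset.sum_congr rfl fun q' _ => by ring
  have A6 : (∑ i : X × Y × X × Y, γ i.1 i.2.1 * γ i.2.2.1 i.2.2.2 *
      (dist i.1 i.2.2.1 - dist i.2.1 i.2.2.2) ^ 2) =
      GWLoss (fun x x' => dist x x') (fun y y' => dist y y') γ := by
    calc (∑ i : X × Y × X × Y, γ i.1 i.2.1 * γ i.2.2.1 i.2.2.2 *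
        (dist i.1 i.2.2.1 - dist i.2.1 i.2.2.2) ^ 2)
        = ∑ x, ∑ y, ∑ x', ∑ y', γ x y * γ x' y' * (dist x x' - dist y y') ^ 2 :=
          quad_eq (fun x y x' y' => γ x y * γ x' y' * (dist x x' - dist y y') ^ 2)
      _ = GWLoss (fun x x' => dist x x') (fun y y' => dist y y') γ := by
          unfold GWLoss
          exact Finset.sum_congr rfl fun x _ => Finset.sum_congr rfl fun y _ =>
            Finset.sum_congr rfl fun x' _ => Finset.sum_congr rfl fun y' _ => by ring
  have hq1 : qEcc (fun x x' => dist x x') μX PX =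
      Real.sqrt (∑ x, dist (PX.rep (PX.part x)) x ^ 2 * μX x) := by
    unfold qEcc
    rw [qEcc_sq' μX PX (fun x x' => dist x x') hX]
  have hq2 : qEcc (fun y y' => dist y y') μY PY =
      Real.sqrt (∑ y, dist (PY.rep (PY.part y)) y ^ 2 * μY y) := by
    unfold qEcc
    rw [qEcc_sq' μY PY (fun y y' => dist y y') (fun y => hγ.2.2 y ▸ Finset.sum_nonneg
      fun x _ => hγ.1 x y)]
  have r1 := congrArg Real.sqrt A1
  have r2 := congrArg Real.sqrt A2
  have r3 := congrArg Real.sqrt A3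
  have r4 := congrArg Real.sqrt A4
  have r5 := congrArg Real.sqrt A5
  have r6 := congrArg Real.sqrt A6
  rw [r5, r6] at key
  rw [r4] at s1
  rw [r3] at s2
  rw [r1, r2] at s3
  rw [hq1, hq2]
  linarith [key, s1, s2, s3]
/-- error bound for the coupling produced by the quantized GW algorithm:
`|d_GW(X,Y) − δ| ≤ 2 (q(P_X) + q(P_Y)) + 8ε`, where `δ = GW(μ)^{1/2}` for the coupling
`μ` assembled from an optimal global coupling `μm` of the quantized representations and
local linear matchings `ν p q`. -/
theorem qGW_algorithm_error_bound
    {X Y : Type*} [Fintype X] [Fintype Y] [MetricSpace X] [MetricSpace Y] {m : ℕ}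
    (μX : X → ℝ) (μY : Y → ℝ) (hμX : IsProb μX) (hμY : IsProb μY)
    (PX : PointedPartition X m) (PY : PointedPartition Y m)
    (ε : ℝ) (hε : 0 < ε)
    (hdiamX : ∀ x x' : X, PX.part x = PX.part x' → dist x x' ≤ ε)
    (hdiamY : ∀ y y' : Y, PY.part y = PY.part y' → dist y y' ≤ ε)
    (μm : Fin m → Fin m → ℝ) (ν : Fin m → Fin m → X → Y → ℝ)
    -- `μm` is an optimal coupling of the quantized representations `Xᵐ` and `Yᵐ`:
    (hμm : IsCoupling (blockMass μX PX) (blockMass μY PY) μm)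
    (hopt : Real.sqrt (GWLoss (fun p p' => dist (PX.rep p) (PX.rep p'))
          (fun q q' => dist (PY.rep q) (PY.rep q')) μm) =
        dGW (fun p p' => dist (PX.rep p) (PX.rep p'))
          (fun q q' => dist (PY.rep q) (PY.rep q'))
          (blockMass μX PX) (blockMass μY PY))
    -- each `ν p q` is a minimizer of the local linear matching objective:
    (hν : ∀ p q, IsCoupling (blockMeasure μX PX p) (blockMeasure μY PY q) (ν p q))
    (hνopt : ∀ p q, ∀ ν' : X → Y → ℝ,
      IsCoupling (blockMeasure μX PX p) (blockMeasure μY PY q) ν' →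
        (∑ x, ∑ y, (dist x (PX.rep p) - dist y (PY.rep q)) ^ 2 * ν p q x y) ≤
          ∑ x, ∑ y, (dist x (PX.rep p) - dist y (PY.rep q)) ^ 2 * ν' x y) :
    |dGW (fun x x' => dist x x') (fun y y' => dist y y') μX μY -
        Real.sqrt (GWLoss (fun x x' => dist x x') (fun y y' => dist y y')
          (fun x y => ∑ p, ∑ q, μm p q * ν p q x y))| ≤
      2 * (qEcc (fun x x' => dist x x') μX PX + qEcc (fun y y' => dist y y') μY PY) +
        8 * ε := by
  obtain ⟨hX, hXsum⟩ := hμX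
  obtain ⟨hY, hYsum⟩ := hμY
  -- the assembled coupling is a genuine coupling of μX and μY
  have hcoup : IsCoupling μX μY (fun x y => ∑ p, ∑ q, μm p q * ν p q x y) :=
    quant_coupling μX μY PX PY hX hY μm ν hμm hν
  -- abbreviations
  set B := Real.sqrt (GWLoss (fun x x' => dist x x') (fun y y' => dist y y')
    (fun x y => ∑ p, ∑ q, μm p q * ν p q x y)) with hB
  set q1 := qEcc (fun x x' => dist x x') μX PX with hq1def
  set q2 := qEcc (fun y y' => dist y y') μY PY with hq2def
  have hq1nn : 0 ≤ q1 := by rw [hq1def]; unfold qEcc; exact Real.sqrt_nonneg _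
  have hq2nn : 0 ≤ q2 := by rw [hq2def]; unfold qEcc; exact Real.sqrt_nonneg _
  have hBnn : 0 ≤ B := Real.sqrt_nonneg _
  -- the two coupling sets
  set S : Set ℝ := {r : ℝ | ∃ μ', IsCoupling μX μY μ' ∧
    r = Real.sqrt (GWLoss (fun x x' => dist x x') (fun y y' => dist y y') μ')} with hSdef
  set Sm : Set ℝ := {r : ℝ | ∃ μ', IsCoupling (blockMass μX PX) (blockMass μY PY) μ' ∧
    r = Real.sqrt (GWLoss (fun p p' => dist (PX.rep p) (PX.rep p'))
      (fun q q' => dist (PY.rep q) (PY.rep q')) μ')} with hSmdef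
  have hAeq : dGW (fun x x' => dist x x') (fun y y' => dist y y') μX μY = sInf S := rfl
  have hAmeq : dGW (fun p p' => dist (PX.rep p) (PX.rep p'))
      (fun q q' => dist (PY.rep q) (PY.rep q'))
      (blockMass μX PX) (blockMass μY PY) = sInf Sm := rfl
  have hSbdd : BddBelow S := by
    refine ⟨0, fun r hr => ?_⟩
    obtain ⟨γ', _, rfl⟩ := hr
    exact Real.sqrt_nonneg _
  have hSmbdd : BddBelow Sm := by
    refine ⟨0, fun r hr => ?_⟩
    obtain ⟨γ', _, rfl⟩ := hr
    exact Real.sqrt_nonneg _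
  have hprod : IsCoupling μX μY (fun x y => μX x * μY y) := by
    refine ⟨fun x y => mul_nonneg (hX x) (hY y), fun x => ?_, fun y => ?_⟩
    · rw [← Finset.mul_sum, hYsum, mul_one]
    · rw [← Finset.sum_mul, hXsum, one_mul]
  have hSne : S.Nonempty := ⟨_, ⟨_, hprod, rfl⟩⟩
  -- A ≤ B
  have hAleB : sInf S ≤ B := csInf_le hSbdd ⟨_, hcoup, rfl⟩
  -- Step 2: B ≤ sqrt GW(μm) + 4ε
  have hdX' : ∀ x : X, dist x (PX.rep (PX.part x)) ≤ ε :=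
    fun x => hdiamX x (PX.rep (PX.part x)) (PX.part_rep (PX.part x)).symm
  have hdY' : ∀ y : Y, dist y (PY.rep (PY.part y)) ≤ ε :=
    fun y => hdiamY y (PY.rep (PY.part y)) (PY.part_rep (PY.part y)).symm
  have hstep2 : B ≤ Real.sqrt (GWLoss (fun p p' => dist (PX.rep p) (PX.rep p'))
      (fun q q' => dist (PY.rep q) (PY.rep q')) μm) + 4 * ε :=
    step2_lemma μX μY hXsum PX PY ε hε.le hdX' hdY'
      (fun x y => ∑ p, ∑ q, μm p q * ν p q x y) hcoup μm
      (fun F => push_pair μX μY PX PY hX μm ν hμm hν F)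
  -- Step 3: sInf Sm ≤ sInf S + (2 q1 + 2 q2)
  have hstep3 : sInf Sm ≤ sInf S + (2 * q1 + 2 * q2) := by
    have lb : ∀ r ∈ S, sInf Sm - (2 * q1 + 2 * q2) ≤ r := by
      rintro r ⟨γ', hγ', rfl⟩
      have hmem : Real.sqrt (GWLoss (fun p p' => dist (PX.rep p) (PX.rep p'))
          (fun q q' => dist (PY.rep q) (PY.rep q')) (pushCoup PX PY γ')) ∈ Sm :=
        ⟨pushCoup PX PY γ', pushCoup_coupling μX μY PX PY γ' hγ', rfl⟩
      have h1 := csInf_le hSmbdd hmem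
      have h2 := step3_lemma μX μY hX hXsum PX PY γ' hγ'
      rw [← hq1def, ← hq2def] at h2
      linarith
    have := le_csInf hSne lb
    linarith
  -- combine
  have hchain : B ≤ sInf S + (2 * q1 + 2 * q2) + 4 * ε := by
    have := hstep2
    rw [hopt, hAmeq] at this
    linarith
  rw [hAeq, abs_le]
  constructor
  · linarith
  · linarith
end
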